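/- arXiv:2509.24747 — 2 statements merged into one kernel-verified Lean document; each statement's English description precedes it below -/
import Mathlib

section
/- Let μ be a Borel probability measure on ℝ with compact support and let c* denote the maximum of its support. For c ∈ ℝ define K_c(X) := (1/c)·log(E[e^{cX}]) if c ≠ 0 and K_0(X) := E[X], and set Φ(X) := ∫_ℝ K_c(X) μ(dc) and ρ_Φ := −Φ on 𝒳. If I ⊆ ℝ is a nonempty open interval and v ∈ 𝒰(I) is a threshold utility satisfying R_v^A(x) ≤ −c* for all x ∈ I, then ρ_Φ is v-SD-consistent on 𝒳: for all X, Y ∈ 𝒳 ∩ 𝓛¹_v with X ≤_{v-SD} Y one has ρ_Φ(X) ≥ ρ_Φ(Y). In particular, this holds for v = 𝔢_c with c ≥ c*. -/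
open MeasureTheory Filter Set

noncomputable section

namespace Paper

variable {Ω : Type*} [MeasurableSpace Ω]

/-- The probability measure `P` is atomless. -/
def Atomless (P : Measure Ω) : Prop :=
  ∀ s : Set Ω, MeasurableSet s → 0 < P s →
    ∃ t : Set Ω, MeasurableSet t ∧ t ⊆ s ∧ 0 < P t ∧ P t < P s

/-- `𝒳`: the essentially bounded random variables. -/
def MemX (P : Measure Ω) (X : Ω → ℝ) : Prop :=
  Measurable X ∧ ∃ C : ℝ, ∀ᵐ ω ∂P, |X ω| ≤ C

/-- `𝒰(I)`: twice differentiable functions with everywhere positive first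
derivative on `I`. -/
def IsUtility (I : Set ℝ) (u : ℝ → ℝ) : Prop :=
  (∀ x ∈ I, DifferentiableAt ℝ u x) ∧
  (∀ x ∈ I, DifferentiableAt ℝ (deriv u) x) ∧
  (∀ x ∈ I, 0 < deriv u x)

/-- Arrow–Pratt coefficient of absolute risk aversion. -/
def RA (u : ℝ → ℝ) (x : ℝ) : ℝ := -deriv (deriv u) x / deriv u x

/-- `𝓛¹_v`: `I`-valued random variables `X` with `v(X)` integrable. -/
def MemL1 (P : Measure Ω) (I : Set ℝ) (v : ℝ → ℝ) (X : Ω → ℝ) : Prop :=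
  Measurable X ∧ (∀ᵐ ω ∂P, X ω ∈ I) ∧ Integrable (fun ω => v (X ω)) P

/-- The `v`-SD order: `X ≤_{v-SD} Y`. -/
def vSD (P : Measure Ω) (I : Set ℝ) (v : ℝ → ℝ) (X Y : Ω → ℝ) : Prop :=
  ∀ u : ℝ → ℝ, IsUtility I u → (∀ x ∈ I, RA v x ≤ RA u x) →
    Integrable (fun ω => u (X ω)) P → Integrable (fun ω => u (Y ω)) P →
    ∫ ω, u (X ω) ∂P ≤ ∫ ω, u (Y ω) ∂P

/-- Second-order stochastic dominance. -/
def SSD (P : Measure Ω) (X Y : Ω → ℝ) : Prop :=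
  ∀ u : ℝ → ℝ, IsUtility Set.univ u → ConcaveOn ℝ Set.univ u →
    Integrable (fun ω => u (X ω)) P → Integrable (fun ω => u (Y ω)) P →
    ∫ ω, u (X ω) ∂P ≤ ∫ ω, u (Y ω) ∂P

/-- Monetary risk measure: antitone and cash-additive on `𝒳`. -/
def IsRiskMeasure (P : Measure Ω) (ρ : (Ω → ℝ) → ℝ) : Prop :=
  (∀ X Y : Ω → ℝ, MemX P X → MemX P Y → (∀ᵐ ω ∂P, X ω ≤ Y ω) → ρ Y ≤ ρ X) ∧
  (∀ X : Ω → ℝ, MemX P X → ∀ c : ℝ, ρ (fun ω => X ω + c) = ρ X - c)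

/-- Worst-case risk measure `ρ^w(X) = ess sup (-X)`. -/
def rhoW (P : Measure Ω) (X : Ω → ℝ) : ℝ :=
  sInf {m : ℝ | ∀ᵐ ω ∂P, -X ω ≤ m}

/-- `v`-SD-consistency of `φ` on the domain `D`. -/
def VSDConsistent (P : Measure Ω) (I : Set ℝ) (v : ℝ → ℝ)
    (D : Set (Ω → ℝ)) (φ : (Ω → ℝ) → ℝ) : Prop :=
  ∀ X Y : Ω → ℝ, X ∈ D → Y ∈ D → MemL1 P I v X → MemL1 P I v Y →
    vSD P I v X Y → φ Y ≤ φ X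

/-- `𝒞`: the a.s. strictly positive bounded random variables. -/
def MemC (P : Measure Ω) (X : Ω → ℝ) : Prop :=
  MemX P X ∧ ∀ᵐ ω ∂P, 0 < X ω

/-- `𝓔 = {e^Y : Y ∈ 𝒳}` (up to a.s. equality). -/
def MemE (P : Measure Ω) (X : Ω → ℝ) : Prop :=
  ∃ Y : Ω → ℝ, MemX P Y ∧ ∀ᵐ ω ∂P, X ω = Real.exp (Y ω)

/-- Return risk measure. -/
def IsRRM (P : Measure Ω) (η : (Ω → ℝ) → ℝ) : Prop :=
  (∀ X : Ω → ℝ, MemC P X → 0 < η X) ∧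
  (∀ X Y : Ω → ℝ, MemC P X → MemC P Y → (∀ᵐ ω ∂P, X ω ≤ Y ω) → η Y ≤ η X) ∧
  (∀ X : Ω → ℝ, MemC P X → ∀ t : ℝ, 0 < t → η (fun ω => t * X ω) = t⁻¹ * η X)

/-- Loss-based return risk measure. -/
def IsLossRRM (P : Measure Ω) (κ : (Ω → ℝ) → ℝ) : Prop :=
  (∀ L : Ω → ℝ, MemC P L → 0 < κ L) ∧
  (∀ L L' : Ω → ℝ, MemC P L → MemC P L' → (∀ᵐ ω ∂P, L' ω ≤ L ω) → κ L' ≤ κ L) ∧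
  (∀ L : Ω → ℝ, MemC P L → ∀ t : ℝ, 0 < t → κ (fun ω => t * L ω) = t * κ L)

/-- Base risk measure `ρ_{Z,v}`. -/
def baseRM (P : Measure Ω) (v : ℝ → ℝ) (Z X : Ω → ℝ) : ℝ :=
  sInf {m : ℝ | vSD P Set.univ v Z (fun ω => X ω + m)}

/-- Lower quantile function. -/
def qf (P : Measure Ω) (X : Ω → ℝ) (r : ℝ) : ℝ :=
  sInf {x : ℝ | r ≤ (P {ω | X ω ≤ x}).toReal}

/-- Expected Shortfall at level `p`. -/
def ES (P : Measure Ω) (p : ℝ) (X : Ω → ℝ) : ℝ :=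
  if p < 1 then -(1 / (1 - p)) * ∫ r in (0:ℝ)..(1 - p), qf P X r
  else rhoW P X

/-- Topological support of a Borel measure on `ℝ`. -/
def msupport (μ : Measure ℝ) : Set ℝ := {c : ℝ | ∀ ε > 0, 0 < μ (Metric.ball c ε)}

/-- The certainty equivalent `K_c`. -/
def Kc (P : Measure Ω) (c : ℝ) (X : Ω → ℝ) : ℝ :=
  if c = 0 then ∫ ω, X ω ∂P
  else (1 / c) * Real.log (∫ ω, Real.exp (c * X ω) ∂P)

/-- The exponential (CARA) utility `𝔢_c`. -/
def caraUtil (c : ℝ) : ℝ → ℝ :=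
  if 0 < c then fun x => Real.exp (c * x)
  else if c = 0 then fun x => x
  else fun x => -Real.exp (c * x)


section Aux

variable (P : Measure Ω) [IsProbabilityMeasure P]

lemma hasDerivAt_expc (c x : ℝ) :
    HasDerivAt (fun y => Real.exp (c * y)) (c * Real.exp (c * x)) x := by
  simpa [mul_comm] using ((hasDerivAt_id x).const_mul c).exp

lemma deriv_expc (c : ℝ) :
    deriv (fun y => Real.exp (c * y)) = fun x => c * Real.exp (c * x) :=
  funext fun x => (hasDerivAt_expc c x).deriv

lemma deriv2_expc (c : ℝ) :
    deriv (fun x => c * Real.exp (c * x)) = fun x => c * (c * Real.exp (c * x)) :=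
  funext fun x => ((hasDerivAt_expc c x).const_mul c).deriv

lemma deriv_neg_expc (c : ℝ) :
    deriv (fun y => -Real.exp (c * y)) = fun x => -(c * Real.exp (c * x)) :=
  funext fun x => (hasDerivAt_expc c x).neg.deriv

lemma deriv2_neg_expc (c : ℝ) :
    deriv (fun x => -(c * Real.exp (c * x))) = fun x => -(c * (c * Real.exp (c * x))) :=
  funext fun x => ((hasDerivAt_expc c x).const_mul c).neg.deriv

lemma util_id (I : Set ℝ) : IsUtility I (fun y => y) := by
  refine ⟨fun x _ => differentiableAt_fun_id, fun x _ => ?_, fun x _ => ?_⟩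
  · rw [deriv_id'']; exact differentiableAt_const 1
  · rw [deriv_id'']; norm_num

lemma RA_id (x : ℝ) : RA (fun y => y) x = 0 := by
  simp [RA, deriv_id'']

lemma util_exp {c : ℝ} (hc : 0 < c) (I : Set ℝ) :
    IsUtility I (fun y => Real.exp (c * y)) := by
  refine ⟨fun x _ => (hasDerivAt_expc c x).differentiableAt, fun x _ => ?_, fun x _ => ?_⟩
  · rw [deriv_expc]; exact ((hasDerivAt_expc c x).const_mul c).differentiableAt
  · rw [deriv_expc]; positivity

lemma RA_exp {c : ℝ} (hc : c ≠ 0) (x : ℝ) :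
    RA (fun y => Real.exp (c * y)) x = -c := by
  unfold RA
  rw [deriv_expc, deriv2_expc]
  have hne : c * Real.exp (c * x) ≠ 0 := mul_ne_zero hc (Real.exp_ne_zero _)
  field_simp

lemma util_neg_exp {c : ℝ} (hc : c < 0) (I : Set ℝ) :
    IsUtility I (fun y => -Real.exp (c * y)) := by
  refine ⟨fun x _ => (hasDerivAt_expc c x).neg.differentiableAt, fun x _ => ?_,
    fun x _ => ?_⟩
  · rw [deriv_neg_expc]; exact ((hasDerivAt_expc c x).const_mul c).neg.differentiableAt
  · rw [deriv_neg_expc]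
    show (0:ℝ) < -(c * Real.exp (c * x))
    have : c * Real.exp (c * x) < 0 := mul_neg_of_neg_of_pos hc (Real.exp_pos _)
    linarith

lemma RA_neg_exp {c : ℝ} (hc : c ≠ 0) (x : ℝ) :
    RA (fun y => -Real.exp (c * y)) x = -c := by
  unfold RA
  rw [deriv_neg_expc, deriv2_neg_expc]
  have hne : c * Real.exp (c * x) ≠ 0 := mul_ne_zero hc (Real.exp_ne_zero _)
  field_simp

lemma memX_C_nonneg {X : Ω → ℝ} {C : ℝ} (hC : ∀ᵐ ω ∂P, |X ω| ≤ C) : 0 ≤ C := by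
  haveI : (ae P).NeBot := ae_neBot.2 (IsProbabilityMeasure.ne_zero P)
  obtain ⟨ω, h⟩ := hC.exists
  exact (abs_nonneg _).trans h

lemma int_of_memX {X : Ω → ℝ} (hX : MemX P X) : Integrable X P := by
  obtain ⟨hm, C, hC⟩ := hX
  refine (integrable_const C).mono' hm.aestronglyMeasurable ?_
  filter_upwards [hC] with ω h
  simpa [Real.norm_eq_abs] using h

lemma int_exp {X : Ω → ℝ} (hm : Measurable X) {C : ℝ} (hC : ∀ᵐ ω ∂P, |X ω| ≤ C)
    (c : ℝ) : Integrable (fun ω => Real.exp (c * X ω)) P := by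
  refine (integrable_const (Real.exp (|c| * C))).mono'
    ((Real.measurable_exp.comp (hm.const_mul c)).aestronglyMeasurable) ?_
  filter_upwards [hC] with ω h
  rw [Real.norm_eq_abs, abs_of_pos (Real.exp_pos _), Real.exp_le_exp]
  calc c * X ω ≤ |c * X ω| := le_abs_self _
    _ = |c| * |X ω| := abs_mul _ _
    _ ≤ |c| * C := mul_le_mul_of_nonneg_left h (abs_nonneg c)

lemma g_lb {X : Ω → ℝ} (hm : Measurable X) {C : ℝ} (hC : ∀ᵐ ω ∂P, |X ω| ≤ C)
    (c : ℝ) : Real.exp (-(|c| * C)) ≤ ∫ ω, Real.exp (c * X ω) ∂P := by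
  have h := integral_mono_ae (integrable_const (Real.exp (-(|c| * C))))
    (int_exp P hm hC c) ?_
  · simpa using h
  · filter_upwards [hC] with ω h
    rw [Real.exp_le_exp]
    have h1 : |c * X ω| ≤ |c| * C := by
      rw [abs_mul]; exact mul_le_mul_of_nonneg_left h (abs_nonneg c)
    have h2 := neg_abs_le (c * X ω)
    linarith

lemma g_ub {X : Ω → ℝ} (hm : Measurable X) {C : ℝ} (hC : ∀ᵐ ω ∂P, |X ω| ≤ C)
    (c : ℝ) : ∫ ω, Real.exp (c * X ω) ∂P ≤ Real.exp (|c| * C) := by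
  have h := integral_mono_ae (int_exp P hm hC c)
    (integrable_const (Real.exp (|c| * C))) ?_
  · simpa using h
  · filter_upwards [hC] with ω h
    rw [Real.exp_le_exp]
    have h1 : |c * X ω| ≤ |c| * C := by
      rw [abs_mul]; exact mul_le_mul_of_nonneg_left h (abs_nonneg c)
    have h2 := le_abs_self (c * X ω)
    linarith

lemma g_pos {X : Ω → ℝ} (hm : Measurable X) {C : ℝ} (hC : ∀ᵐ ω ∂P, |X ω| ≤ C)
    (c : ℝ) : 0 < ∫ ω, Real.exp (c * X ω) ∂P :=
  lt_of_lt_of_le (Real.exp_pos _) (g_lb P hm hC c)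

lemma abs_Kc_le {X : Ω → ℝ} (hm : Measurable X) {C : ℝ} (hC : ∀ᵐ ω ∂P, |X ω| ≤ C)
    (c : ℝ) : |Kc P c X| ≤ C := by
  have hC0 : 0 ≤ C := memX_C_nonneg P hC
  unfold Kc
  split_ifs with h
  · calc |∫ ω, X ω ∂P| ≤ ∫ ω, |X ω| ∂P := by
          simpa [Real.norm_eq_abs] using norm_integral_le_integral_norm (μ := P) X
      _ ≤ ∫ _ω, C ∂P := integral_mono_ae (int_of_memX P ⟨hm, C, hC⟩).abs
          (integrable_const C) hC
      _ = C := by simp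
  · have hpos := g_pos P hm hC c
    have hlog : |Real.log (∫ ω, Real.exp (c * X ω) ∂P)| ≤ |c| * C := by
      rw [abs_le]
      constructor
      · have := Real.log_le_log (Real.exp_pos _) (g_lb P hm hC c)
        rwa [Real.log_exp] at this
      · have := Real.log_le_log hpos (g_ub P hm hC c)
        rwa [Real.log_exp] at this
    have hcne : |c| ≠ 0 := abs_ne_zero.2 h
    calc |1 / c * Real.log (∫ ω, Real.exp (c * X ω) ∂P)|
        = |c|⁻¹ * |Real.log (∫ ω, Real.exp (c * X ω) ∂P)| := by
          rw [abs_mul, one_div, abs_inv]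
      _ ≤ |c|⁻¹ * (|c| * C) := by
          exact mul_le_mul_of_nonneg_left hlog (inv_nonneg.2 (abs_nonneg c))
      _ = C := by rw [← mul_assoc, inv_mul_cancel₀ hcne, one_mul]

lemma meas_Kc {X : Ω → ℝ} (hm : Measurable X) : Measurable fun c => Kc P c X := by
  have hg : StronglyMeasurable fun c : ℝ => ∫ ω, Real.exp (c * X ω) ∂P :=
    StronglyMeasurable.integral_prod_right
      ((Real.measurable_exp.comp
        (measurable_fst.mul (hm.comp measurable_snd))).stronglyMeasurable)
  unfold Kc
  exact Measurable.ite measurableSet_eq measurable_const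
    ((measurable_const.div measurable_id).mul (Real.measurable_log.comp hg.measurable))

lemma int_Kc (μ : Measure ℝ) [IsProbabilityMeasure μ] {X : Ω → ℝ} (hX : MemX P X) :
    Integrable (fun c => Kc P c X) μ := by
  obtain ⟨hm, C, hC⟩ := hX
  refine (integrable_const C).mono' (meas_Kc P hm).aestronglyMeasurable ?_
  exact Filter.Eventually.of_forall fun c => by
    simpa [Real.norm_eq_abs] using abs_Kc_le P hm hC c

lemma Kc_mono {I : Set ℝ} {v : ℝ → ℝ} {cstar : ℝ} (hRA : ∀ x ∈ I, RA v x ≤ -cstar)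
    {X Y : Ω → ℝ} (hX : MemX P X) (hY : MemX P Y) (hXY : vSD P I v X Y)
    {c : ℝ} (hc : c ≤ cstar) : Kc P c X ≤ Kc P c Y := by
  obtain ⟨hmX, CX, hCX⟩ := hX
  obtain ⟨hmY, CY, hCY⟩ := hY
  rcases lt_trichotomy c 0 with h0 | h0 | h0
  · have hineq := hXY (fun y => -Real.exp (c * y)) (util_neg_exp h0 I)
      (fun x hx => by rw [RA_neg_exp h0.ne]; linarith [hRA x hx])
      ((int_exp P hmX hCX c).neg) ((int_exp P hmY hCY c).neg)
    simp only [integral_neg, neg_le_neg_iff] at hineq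
    simp only [Kc, if_neg h0.ne]
    have hlog := Real.log_le_log (g_pos P hmY hCY c) hineq
    exact mul_le_mul_of_nonpos_left hlog (le_of_lt (one_div_neg.2 h0))
  · subst h0
    simp only [Kc, if_pos rfl]
    exact hXY (fun y => y) (util_id I)
      (fun x hx => by rw [RA_id]; linarith [hRA x hx])
      (int_of_memX P ⟨hmX, CX, hCX⟩) (int_of_memX P ⟨hmY, CY, hCY⟩)
  · have hineq := hXY (fun y => Real.exp (c * y)) (util_exp h0 I)
      (fun x hx => by rw [RA_exp h0.ne']; linarith [hRA x hx])
      (int_exp P hmX hCX c) (int_exp P hmY hCY c)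
    simp only [Kc, if_neg h0.ne']
    have hlog := Real.log_le_log (g_pos P hmX hCX c) hineq
    exact mul_le_mul_of_nonneg_left hlog (le_of_lt (one_div_pos.2 h0))

lemma main_consistent (μ : Measure ℝ) [IsProbabilityMeasure μ]
    (hnull : μ (msupport μ)ᶜ = 0) (cstar : ℝ) (hub : ∀ c ∈ msupport μ, c ≤ cstar)
    (I : Set ℝ) (v : ℝ → ℝ) (hRA : ∀ x ∈ I, RA v x ≤ -cstar) :
    VSDConsistent P I v {X | MemX P X} (fun X => -∫ c, Kc P c X ∂μ) := by
  intro X Y hX hY _hXv _hYv hXY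
  have hmem : ∀ᵐ c ∂μ, c ∈ msupport μ := hnull
  have hle : ∫ c, Kc P c X ∂μ ≤ ∫ c, Kc P c Y ∂μ := by
    refine integral_mono_ae (int_Kc P μ hX) (int_Kc P μ hY) ?_
    filter_upwards [hmem] with c hc
    exact Kc_mono P hRA hX hY hXY (hub c hc)
  simp only
  linarith

end Aux

/-- If `μ` is a compactly supported Borel probability measure on
`ℝ` with maximum of support `cstar`, `Φ(X) = ∫ K_c(X) μ(dc)` and `ρ_Φ = -Φ`, and
`v ∈ 𝒰(I)` satisfies `R_v^A ≤ -cstar` on `I`, then `ρ_Φ` is `v`-SD-consistent on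
`𝒳`; in particular this holds for `v = 𝔢_c` with `c ≥ cstar`. -/
theorem statement1 (P : Measure Ω) [IsProbabilityMeasure P] (hP : Atomless P)
    (μ : Measure ℝ) [IsProbabilityMeasure μ]
    (hcomp : IsCompact (msupport μ)) (hnull : μ (msupport μ)ᶜ = 0)
    (cstar : ℝ) (hcstar : IsGreatest (msupport μ) cstar)
    (I : Set ℝ) (hIopen : IsOpen I) (hIconn : I.OrdConnected) (hIne : I.Nonempty)
    (v : ℝ → ℝ) (hv : IsUtility I v) (hRA : ∀ x ∈ I, RA v x ≤ -cstar) :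
    VSDConsistent P I v {X | MemX P X} (fun X => -∫ c, Kc P c X ∂μ) ∧
    (∀ c : ℝ, cstar ≤ c →
      VSDConsistent P Set.univ (caraUtil c) {X | MemX P X}
        (fun X => -∫ c', Kc P c' X ∂μ)) := by
  constructor
  · exact main_consistent P μ hnull cstar hcstar.2 I v hRA
  · intro c hc
    refine main_consistent P μ hnull cstar hcstar.2 Set.univ (caraUtil c) ?_
    intro x _
    unfold caraUtil
    split_ifs with h1 h2
    · rw [RA_exp (ne_of_gt h1)]; linarith
    · rw [RA_id]; linarith
    · rw [RA_neg_exp h2]; linarith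

end Paper
end
end

section
/- A monetary risk measure ρ: 𝒳 → ℝ is SSD-consistent (equivalently, 𝔢₀-SD-consistent) if and only if there exists a family 𝒢 of nondecreasing functions g: [0,1] → ℝ such that for all X ∈ 𝒳, ρ(X) = inf_{g∈𝒢} sup_{p∈[0,1]} ( ES_p(X) − g(p) ). -/
open MeasureTheory Filter Set

noncomputable section

namespace Paper

variable {Ω : Type*} [MeasurableSpace Ω]

section QF

variable {P : Measure Ω} [IsProbabilityMeasure P] {X : Ω → ℝ} {C x r : ℝ}

/-- cdf -/
def cdfF (P : Measure Ω) (X : Ω → ℝ) (x : ℝ) : ℝ := (P {ω | X ω ≤ x}).toReal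

lemma qf_eq (P : Measure Ω) (X : Ω → ℝ) (r : ℝ) :
    qf P X r = sInf {x : ℝ | r ≤ cdfF P X x} := rfl

lemma cdfF_mono : Monotone (cdfF P X) := fun a b hab =>
  ENNReal.toReal_mono (measure_ne_top _ _) (measure_mono fun ω h => le_trans h hab)

lemma cdfF_nonneg (x : ℝ) : 0 ≤ cdfF P X x := ENNReal.toReal_nonneg

lemma cdfF_le_one (x : ℝ) : cdfF P X x ≤ 1 := by
  have h := prob_le_one (μ := P) (s := {ω | X ω ≤ x})
  have := ENNReal.toReal_mono (by simp) h
  simpa [cdfF] using this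

lemma cdfF_eq_one (hX : Measurable X) (hC : ∀ᵐ ω ∂P, |X ω| ≤ C) (hx : C ≤ x) :
    cdfF P X x = 1 := by
  have h0 : P {ω | ¬ X ω ≤ x} = 0 := by
    have hae : ∀ᵐ ω ∂P, X ω ≤ x := by
      filter_upwards [hC] with ω h using (abs_le.mp h).2.trans hx
    exact ae_iff.mp hae
  have h1 : P {ω | X ω ≤ x} = 1 := by
    rw [← prob_compl_eq_zero_iff (measurableSet_le hX measurable_const)]
    simpa [Set.compl_setOf] using h0
  simp [cdfF, h1]

lemma cdfF_eq_zero (hX : Measurable X) (hC : ∀ᵐ ω ∂P, |X ω| ≤ C) (hx : x < -C) :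
    cdfF P X x = 0 := by
  have h1 : P {ω | X ω ≤ x} = 0 := by
    have hae : ∀ᵐ ω ∂P, ¬ X ω ≤ x := by
      filter_upwards [hC] with ω h
      exact not_le.mpr (lt_of_lt_of_le hx (abs_le.mp h).1)
    simpa using ae_iff.mp hae
  simp [cdfF, h1]

lemma qfS_nonempty (hX : Measurable X) (hC : ∀ᵐ ω ∂P, |X ω| ≤ C) (hr1 : r ≤ 1) :
    {x : ℝ | r ≤ cdfF P X x}.Nonempty :=
  ⟨C, by simpa [cdfF_eq_one hX hC le_rfl] using hr1⟩

lemma qfS_subset (hX : Measurable X) (hC : ∀ᵐ ω ∂P, |X ω| ≤ C) (hr : 0 < r) :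
    {x : ℝ | r ≤ cdfF P X x} ⊆ Set.Ici (-C) := by
  intro x hx
  by_contra hlt
  have h0 : cdfF P X x = 0 := cdfF_eq_zero hX hC (by simpa using not_le.mp hlt)
  have hx2 : r <= (0:ℝ) := by rw [← h0]; exact hx
  exact (not_le.mpr hr) hx2

lemma qfS_bddBelow (hX : Measurable X) (hC : ∀ᵐ ω ∂P, |X ω| ≤ C) (hr : 0 < r) :
    BddBelow {x : ℝ | r ≤ cdfF P X x} :=
  ⟨-C, fun x hx => qfS_subset hX hC hr hx⟩

lemma qf_le_of (hX : Measurable X) (hC : ∀ᵐ ω ∂P, |X ω| ≤ C) (hr : 0 < r)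
    (hx : r ≤ cdfF P X x) : qf P X r ≤ x :=
  csInf_le (qfS_bddBelow hX hC hr) hx

lemma neg_le_qf (hX : Measurable X) (hC : ∀ᵐ ω ∂P, |X ω| ≤ C) (hr : 0 < r) (hr1 : r ≤ 1) :
    -C ≤ qf P X r :=
  le_csInf (qfS_nonempty hX hC hr1) (fun x hx => qfS_subset hX hC hr hx)

lemma qf_le_C (hX : Measurable X) (hC : ∀ᵐ ω ∂P, |X ω| ≤ C) (hr : 0 < r) (hr1 : r ≤ 1) :
    qf P X r ≤ C :=
  qf_le_of hX hC hr (by simp [cdfF_eq_one hX hC le_rfl, hr1])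

/-- Right-continuity: the infimum is attained. -/
lemma le_cdfF_qf (hX : Measurable X) (hC : ∀ᵐ ω ∂P, |X ω| ≤ C)
    (hr : 0 < r) (hr1 : r ≤ 1) : r ≤ cdfF P X (qf P X r) := by
  set q := qf P X r with hq
  -- for every n, r ≤ cdfF (q + 1/(n+1))
  have key : ∀ n : ℕ, ENNReal.ofReal r ≤ P {ω | X ω ≤ q + 1/(n+1)} := by
    intro n
    have hpos : (0:ℝ) < 1/(n+1) := by positivity
    obtain ⟨a, ha, halt⟩ := csInf_lt_iff (qfS_bddBelow hX hC hr)
      (qfS_nonempty hX hC hr1) |>.mp (lt_add_of_pos_right q hpos)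
    have : r ≤ cdfF P X (q + 1/(n+1)) := le_trans ha (cdfF_mono halt.le)
    exact ENNReal.ofReal_le_of_le_toReal this
  have hInter : ⋂ n : ℕ, {ω | X ω ≤ q + 1/(n+1)} = {ω | X ω ≤ q} := by
    ext ω
    simp only [Set.mem_iInter, Set.mem_setOf_eq]
    constructor
    · intro h
      have : Tendsto (fun n : ℕ => q + 1/(n+1)) atTop (nhds q) := by
        have : Tendsto (fun n : ℕ => 1/((n:ℝ)+1)) atTop (nhds 0) :=
          tendsto_one_div_add_atTop_nhds_zero_nat
        simpa using (tendsto_const_nhds (x := q)).add this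
      exact ge_of_tendsto this (Filter.Eventually.of_forall h)
    · intro h n
      have hpos : (0:ℝ) < 1/(n+1) := by positivity
      linarith
  have hmono : Antitone (fun n : ℕ => {ω | X ω ≤ q + 1/(n+1)}) := by
    intro m n hmn
    intro ω h
    have hcast : ((m:ℝ)+1) ≤ (n:ℝ)+1 := by exact_mod_cast Nat.succ_le_succ hmn
    have h2 : (1:ℝ)/((n:ℝ)+1) ≤ 1/((m:ℝ)+1) := one_div_le_one_div_of_le (by positivity) hcast
    simp only [Set.mem_setOf_eq] at h ⊢
    linarith
  have htend := tendsto_measure_iInter_atTop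
    (μ := P) (s := fun n : ℕ => {ω | X ω ≤ q + 1/(n+1)})
    (fun n => (measurableSet_le hX measurable_const).nullMeasurableSet) hmono
    ⟨0, measure_ne_top _ _⟩
  rw [hInter] at htend
  have hlim : ENNReal.ofReal r ≤ P {ω | X ω ≤ q} :=
    ge_of_tendsto' htend (fun n => key n)
  have := ENNReal.toReal_mono (measure_ne_top _ _) hlim
  simpa [ENNReal.toReal_ofReal hr.le, cdfF] using this

lemma qf_le_iff (hX : Measurable X) (hC : ∀ᵐ ω ∂P, |X ω| ≤ C)
    (hr : 0 < r) (hr1 : r ≤ 1) : qf P X r ≤ x ↔ r ≤ cdfF P X x := by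
  constructor
  · intro h
    exact le_trans (le_cdfF_qf hX hC hr hr1) (cdfF_mono h)
  · exact qf_le_of hX hC hr

lemma qf_mono_on (hX : Measurable X) (hC : ∀ᵐ ω ∂P, |X ω| ≤ C) {r r' : ℝ}
    (hr : 0 < r) (hrr : r ≤ r') (hr1 : r' ≤ 1) : qf P X r ≤ qf P X r' :=
  csInf_le_csInf (qfS_bddBelow hX hC hr) (qfS_nonempty hX hC hr1)
    (fun x hx => le_trans hrr hx)

lemma qf_of_nonpos (hr : r ≤ 0) : qf P X r = 0 := by
  have : {x : ℝ | r ≤ cdfF P X x} = Set.univ := by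
    ext x; simp [le_trans hr (cdfF_nonneg x)]
  rw [qf_eq, this]
  have : ¬ BddBelow (Set.univ : Set ℝ) := by
    rintro ⟨b, hb⟩
    exact absurd (hb (Set.mem_univ (b-1))) (by norm_num)
  exact Real.sInf_of_not_bddBelow this

lemma qf_of_one_lt (hr : 1 < r) : qf P X r = 0 := by
  have : {x : ℝ | r ≤ cdfF P X x} = ∅ := by
    ext x
    simp only [Set.mem_setOf_eq, Set.mem_empty_iff_false, iff_false, not_le]
    exact lt_of_le_of_lt (cdfF_le_one x) hr
  rw [qf_eq, this, Real.sInf_empty]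

lemma qf_abs_le (hX : Measurable X) (hC : ∀ᵐ ω ∂P, |X ω| ≤ C) (r : ℝ) :
    |qf P X r| ≤ max C 0 := by
  rcases le_or_gt r 0 with h | h
  · simp [qf_of_nonpos h]
  rcases le_or_gt r 1 with h1 | h1
  · rw [abs_le]
    constructor
    · exact le_trans (by simp) (neg_le_qf hX hC h h1)
    · exact le_trans (qf_le_C hX hC h h1) (le_max_left _ _)
  · simp [qf_of_one_lt h1]

lemma measurable_qf (hX : Measurable X) (hC : ∀ᵐ ω ∂P, |X ω| ≤ C) :
    Measurable (qf P X) := by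
  apply measurable_of_Iic
  intro s
  have hset : qf P X ⁻¹' Set.Iic s =
      (Set.Ioc 0 1 ∩ Set.Iic (cdfF P X s)) ∪
        (if 0 ≤ s then (Set.Iic (0:ℝ) ∪ Set.Ioi 1) else ∅) := by
    by_cases hs : 0 ≤ s
    · rw [if_pos hs]
      ext r
      simp only [Set.mem_preimage, Set.mem_Iic, Set.mem_union, Set.mem_inter_iff,
        Set.mem_Ioc, Set.mem_Ioi]
      rcases le_or_gt r 0 with h0 | h0
      · simp [qf_of_nonpos h0, hs, h0]
      rcases le_or_gt r 1 with h1 | h1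
      · rw [qf_le_iff hX hC h0 h1]
        simp [h0, h1, not_le.mpr h0, not_lt.mpr h1]
      · simp [qf_of_one_lt h1, hs, h1]
    · rw [if_neg hs]
      ext r
      simp only [Set.mem_preimage, Set.mem_Iic, Set.mem_union, Set.mem_inter_iff,
        Set.mem_Ioc, Set.union_empty]
      rcases le_or_gt r 0 with h0 | h0
      · simp [qf_of_nonpos h0, hs, not_lt.mpr h0]
      rcases le_or_gt r 1 with h1 | h1
      · rw [qf_le_iff hX hC h0 h1]
        simp [h0, h1]
      · simp [qf_of_one_lt h1, hs, not_le.mpr h1]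
  rw [hset]
  refine MeasurableSet.union (measurableSet_Ioc.inter measurableSet_Iic) ?_
  split
  · exact measurableSet_Iic.union measurableSet_Ioi
  · exact MeasurableSet.empty

end QF

section Map

variable {P : Measure Ω} [IsProbabilityMeasure P] {X : Ω → ℝ} {C : ℝ}

lemma integrable_of_ae_bound {α : Type*} [MeasurableSpace α] {μ : Measure α}
    [IsFiniteMeasure μ] {f : α → ℝ} (hm : AEStronglyMeasurable f μ) {B : ℝ}
    (hb : ∀ᵐ a ∂μ, |f a| ≤ B) : Integrable f μ :=
  (integrable_const B).mono' hm (by simpa [Real.norm_eq_abs] using hb)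

lemma map_qf (hX : Measurable X) (hC : ∀ᵐ ω ∂P, |X ω| ≤ C) :
    Measure.map (qf P X) (volume.restrict (Set.Ioc (0:ℝ) 1)) = Measure.map X P := by
  haveI : IsFiniteMeasure (volume.restrict (Set.Ioc (0:ℝ) 1)) :=
    ⟨by rw [Measure.restrict_apply_univ]; simp⟩
  haveI : IsFiniteMeasure (Measure.map (qf P X) (volume.restrict (Set.Ioc (0:ℝ) 1))) :=
    Measure.isFiniteMeasure_map _ _
  refine Measure.ext_of_Iic _ _ (fun s => ?_)
  rw [Measure.map_apply (measurable_qf hX hC) measurableSet_Iic,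
      Measure.map_apply hX measurableSet_Iic,
      Measure.restrict_apply' measurableSet_Ioc]
  have hset : qf P X ⁻¹' Set.Iic s ∩ Set.Ioc 0 1 = Set.Ioc (0:ℝ) (cdfF P X s) := by
    ext r
    simp only [Set.mem_inter_iff, Set.mem_preimage, Set.mem_Iic, Set.mem_Ioc]
    constructor
    · rintro ⟨hq, h0, h1⟩
      exact ⟨h0, (qf_le_iff hX hC h0 h1).mp hq⟩
    · rintro ⟨h0, hF⟩
      have h1 : r ≤ 1 := le_trans hF (cdfF_le_one s)
      exact ⟨(qf_le_iff hX hC h0 h1).mpr hF, h0, h1⟩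
  rw [hset, Real.volume_Ioc]
  have hXs : X ⁻¹' Set.Iic s = {ω | X ω ≤ s} := rfl
  rw [hXs]
  simp only [cdfF, sub_zero]
  exact ENNReal.ofReal_toReal (measure_ne_top _ _)

lemma integral_qf_comp (hX : Measurable X) (hC : ∀ᵐ ω ∂P, |X ω| ≤ C)
    {f : ℝ → ℝ} (hf : Measurable f) :
    ∫ r in Set.Ioc (0:ℝ) 1, f (qf P X r) = ∫ ω, f (X ω) ∂P := by
  rw [← integral_map (measurable_qf hX hC).aemeasurable
      hf.aestronglyMeasurable (μ := volume.restrict (Set.Ioc (0:ℝ) 1)),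
    map_qf hX hC, integral_map hX.aemeasurable hf.aestronglyMeasurable]

lemma integral_qf_eq_mean (hX : Measurable X) (hC : ∀ᵐ ω ∂P, |X ω| ≤ C) :
    ∫ r in Set.Ioc (0:ℝ) 1, qf P X r = ∫ ω, X ω ∂P :=
  integral_qf_comp hX hC measurable_id

lemma integrableOn_qf (hX : Measurable X) (hC : ∀ᵐ ω ∂P, |X ω| ≤ C) {t : ℝ} :
    IntegrableOn (qf P X) (Set.Ioc (0:ℝ) t) := by
  haveI : IsFiniteMeasure (volume.restrict (Set.Ioc (0:ℝ) t)) :=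
    ⟨by rw [Measure.restrict_apply_univ]; simp⟩
  exact integrable_of_ae_bound ((measurable_qf hX hC).aestronglyMeasurable)
    (Filter.Eventually.of_forall fun r => qf_abs_le hX hC r)

end Map


section PartialIntegrals

variable {P : Measure Ω} [IsProbabilityMeasure P] {X Y : Ω → ℝ} {C D t q : ℝ}

lemma integrableOn_min_qf (hX : Measurable X) (hC : ∀ᵐ ω ∂P, |X ω| ≤ C) (q : ℝ) {t : ℝ} :
    IntegrableOn (fun r => min (qf P X r) q) (Set.Ioc (0:ℝ) t) := by
  haveI : IsFiniteMeasure (volume.restrict (Set.Ioc (0:ℝ) t)) :=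
    ⟨by rw [Measure.restrict_apply_univ]; simp⟩
  refine integrable_of_ae_bound (B := max (max C 0) |q|)
    (((measurable_qf hX hC).min measurable_const).aestronglyMeasurable)
    (Filter.Eventually.of_forall fun r => ?_)
  have h1 := qf_abs_le hX hC r
  rw [abs_le] at h1 ⊢
  refine ⟨le_min ?_ ?_, min_le_of_left_le ?_⟩
  · linarith [le_max_left (max C 0) |q|]
  · linarith [le_max_right (max C 0) |q|, neg_abs_le q]
  · linarith [le_max_left (max C 0) |q|]

lemma integrableOn_qf_Ioc (hX : Measurable X) (hC : ∀ᵐ ω ∂P, |X ω| ≤ C)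
    {a b : ℝ} (ha : 0 ≤ a) : IntegrableOn (qf P X) (Set.Ioc a b) := by
  haveI : IsFiniteMeasure (volume.restrict (Set.Ioc a b)) :=
    ⟨by rw [Measure.restrict_apply_univ]; simp⟩
  exact integrable_of_ae_bound ((measurable_qf hX hC).aestronglyMeasurable)
    (Filter.Eventually.of_forall fun r => qf_abs_le hX hC r)

lemma integral_Ioc_qf_le (hX : Measurable X) (hC : ∀ᵐ ω ∂P, |X ω| ≤ C)
    (ht : 0 < t) (ht1 : t ≤ 1) :
    ∫ r in Set.Ioc (0:ℝ) t, qf P X r ≤ t * qf P X t := by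
  have h := setIntegral_mono_on (integrableOn_qf hX hC)
    (integrableOn_const (by simp))
    measurableSet_Ioc (fun r hr => qf_mono_on hX hC hr.1 hr.2 ht1)
  rw [setIntegral_const] at h
  simpa [Real.volume_Ioc, ENNReal.toReal_ofReal ht.le, max_eq_left ht.le, smul_eq_mul] using h

lemma le_integral_Ioc_qf (hX : Measurable X) (hC : ∀ᵐ ω ∂P, |X ω| ≤ C)
    (ht : 0 < t) (ht1 : t ≤ 1) :
    (1 - t) * qf P X t ≤ ∫ r in Set.Ioc t 1, qf P X r := by
  have h := setIntegral_mono_on (integrableOn_const (by simp))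
    ((integrableOn_qf hX hC (t := 1)).mono_set (Set.Ioc_subset_Ioc_left ht.le))
    measurableSet_Ioc (fun r hr => qf_mono_on hX hC ht hr.1.le hr.2)
  rw [setIntegral_const] at h
  simpa [Real.volume_Ioc, ENNReal.toReal_ofReal (by linarith : (0:ℝ) ≤ 1 - t),
    max_eq_left (by linarith : (0:ℝ) ≤ 1 - t), smul_eq_mul] using h

lemma integral_Ioc_split {f : ℝ → ℝ} (hf : IntegrableOn f (Set.Ioc (0:ℝ) 1))
    (ht : 0 ≤ t) (ht1 : t ≤ 1) :
    ∫ r in Set.Ioc (0:ℝ) 1, f r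
      = (∫ r in Set.Ioc (0:ℝ) t, f r) + ∫ r in Set.Ioc t 1, f r := by
  rw [← Set.Ioc_union_Ioc_eq_Ioc ht ht1]
  exact setIntegral_union (Set.Ioc_disjoint_Ioc_of_le le_rfl) measurableSet_Ioc
    (hf.mono_set (by rw [← Set.Ioc_union_Ioc_eq_Ioc ht ht1]; exact Set.subset_union_left))
    (hf.mono_set (by rw [← Set.Ioc_union_Ioc_eq_Ioc ht ht1]; exact Set.subset_union_right))

lemma emin_eq_integral_qf (hX : Measurable X) (hC : ∀ᵐ ω ∂P, |X ω| ≤ C) (q : ℝ) :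
    ∫ ω, min (X ω) q ∂P = ∫ r in Set.Ioc (0:ℝ) 1, min (qf P X r) q :=
  (integral_qf_comp hX hC (measurable_id.min measurable_const)).symm

lemma emin_le_partial (hX : Measurable X) (hC : ∀ᵐ ω ∂P, |X ω| ≤ C)
    (ht : 0 < t) (ht1 : t ≤ 1) (q : ℝ) :
    ∫ ω, min (X ω) q ∂P ≤ (∫ r in Set.Ioc (0:ℝ) t, qf P X r) + (1 - t) * q := by
  rw [emin_eq_integral_qf hX hC q,
    integral_Ioc_split (integrableOn_min_qf hX hC q) ht.le ht1]
  have h1 : ∫ r in Set.Ioc (0:ℝ) t, min (qf P X r) q ≤ ∫ r in Set.Ioc (0:ℝ) t, qf P X r :=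
    setIntegral_mono_on (integrableOn_min_qf hX hC q) (integrableOn_qf hX hC)
      measurableSet_Ioc (fun r _ => min_le_left _ _)
  have h2 : ∫ r in Set.Ioc t 1, min (qf P X r) q ≤ (1 - t) * q := by
    have h := setIntegral_mono_on
      ((integrableOn_min_qf hX hC q (t := 1)).mono_set (Set.Ioc_subset_Ioc_left ht.le))
      (integrableOn_const (by simp))
      measurableSet_Ioc (fun r _ => min_le_right _ _)
    rw [setIntegral_const] at h
    simpa [Real.volume_Ioc, ENNReal.toReal_ofReal (by linarith : (0:ℝ) ≤ 1 - t),
      max_eq_left (by linarith : (0:ℝ) ≤ 1 - t), smul_eq_mul] using h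
  linarith

lemma emin_eq_partial (hX : Measurable X) (hC : ∀ᵐ ω ∂P, |X ω| ≤ C)
    (ht : 0 < t) (ht1 : t ≤ 1) :
    ∫ ω, min (X ω) (qf P X t) ∂P
      = (∫ r in Set.Ioc (0:ℝ) t, qf P X r) + (1 - t) * qf P X t := by
  rw [emin_eq_integral_qf hX hC _,
    integral_Ioc_split (integrableOn_min_qf hX hC _) ht.le ht1]
  have h1 : ∫ r in Set.Ioc (0:ℝ) t, min (qf P X r) (qf P X t)
      = ∫ r in Set.Ioc (0:ℝ) t, qf P X r := by
    refine setIntegral_congr_fun measurableSet_Ioc (fun r hr => ?_)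
    exact min_eq_left (qf_mono_on hX hC hr.1 hr.2 ht1)
  have h2 : ∫ r in Set.Ioc t 1, min (qf P X r) (qf P X t) = (1 - t) * qf P X t := by
    have : ∫ r in Set.Ioc t 1, min (qf P X r) (qf P X t)
        = ∫ _ in Set.Ioc t 1, qf P X t := by
      refine setIntegral_congr_fun measurableSet_Ioc (fun r hr => ?_)
      exact min_eq_right (qf_mono_on hX hC ht hr.1.le hr.2)
    rw [this, setIntegral_const]
    simp [Real.volume_Ioc, ENNReal.toReal_ofReal (by linarith : (0:ℝ) ≤ 1 - t), ht1, smul_eq_mul]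
  rw [h1, h2]

/-- Key transfer: domination of all expected put payoffs gives domination of
partial quantile integrals. -/
lemma integral_qf_le_of_emin (hX : Measurable X) (hC : ∀ᵐ ω ∂P, |X ω| ≤ C)
    (hY : Measurable Y) (hD : ∀ᵐ ω ∂P, |Y ω| ≤ D)
    (hmin : ∀ q : ℝ, ∫ ω, min (X ω) q ∂P ≤ ∫ ω, min (Y ω) q ∂P)
    (ht : 0 < t) (ht1 : t ≤ 1) :
    ∫ r in Set.Ioc (0:ℝ) t, qf P X r ≤ ∫ r in Set.Ioc (0:ℝ) t, qf P Y r := by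
  have h1 := emin_eq_partial hX hC ht ht1
  have h2 := hmin (qf P X t)
  have h3 := emin_le_partial hY hD ht ht1 (qf P X t)
  linarith

end PartialIntegrals


section SmoothMin

variable {c q x : ℝ}

/-- Smooth approximation of `x ↦ min x q`. -/
def uMin (c q x : ℝ) : ℝ :=
  -(1/c) * Real.log (Real.exp (-(c*x)) + Real.exp (-(c*q)))

lemma uMin_g_pos (c q x : ℝ) : 0 < Real.exp (-(c*x)) + Real.exp (-(c*q)) := by positivity

lemma hasDerivAt_uMin (hc : 0 < c) (q x : ℝ) :
    HasDerivAt (uMin c q) ((1 + Real.exp (c*(x-q)))⁻¹) x := by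
  have hg : HasDerivAt (fun y => Real.exp (-(c*y)) + Real.exp (-(c*q)))
      (Real.exp (-(c*x)) * (-c)) x := by
    have h1 : HasDerivAt (fun y : ℝ => -(c*y)) (-c) x := by
      have h := (hasDerivAt_id x).const_mul (-c)
      simp only [id_eq, mul_one] at h
      have e : (fun y : ℝ => -(c*y)) = fun y => -c * y := by funext y; ring
      rw [e]; exact h
    exact (h1.exp).add_const _
  have hlog := (hg.log (uMin_g_pos c q x).ne').const_mul (-(1/c))
  have hval : -(1/c) * (Real.exp (-(c*x)) * (-c) / (Real.exp (-(c*x)) + Real.exp (-(c*q))))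
      = (1 + Real.exp (c*(x-q)))⁻¹ := by
    have ha : Real.exp (-(c*x)) ≠ 0 := (Real.exp_pos _).ne'
    have hb : Real.exp (-(c*x)) + Real.exp (-(c*q)) ≠ 0 := (uMin_g_pos c q x).ne'
    have hd : (1:ℝ) + Real.exp (c*(x-q)) ≠ 0 := by positivity
    have he : Real.exp (c*(x-q)) * Real.exp (-(c*x)) = Real.exp (-(c*q)) := by
      rw [← Real.exp_add]; ring_nf
    have h2 : -(1/c) * (Real.exp (-(c*x)) * (-c) / (Real.exp (-(c*x)) + Real.exp (-(c*q))))
        = Real.exp (-(c*x)) / (Real.exp (-(c*x)) + Real.exp (-(c*q))) := by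
      field_simp
    rw [h2, inv_eq_one_div, div_eq_div_iff hb hd]
    linear_combination he
  rw [← hval]
  exact hlog

lemma deriv_uMin (hc : 0 < c) (q : ℝ) :
    deriv (uMin c q) = fun x => (1 + Real.exp (c*(x-q)))⁻¹ :=
  funext fun x => (hasDerivAt_uMin hc q x).deriv

lemma hasDerivAt_deriv_uMin (hc : 0 < c) (q x : ℝ) :
    HasDerivAt (fun x => (1 + Real.exp (c*(x-q)))⁻¹)
      (-(Real.exp (c*(x-q)) * c) / (1 + Real.exp (c*(x-q)))^2) x := by
  have h1 : HasDerivAt (fun y : ℝ => 1 + Real.exp (c*(y-q))) (Real.exp (c*(x-q)) * c) x := by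
    have h0 : HasDerivAt (fun y : ℝ => c*(y-q)) c x := by
      simpa using ((hasDerivAt_id x).sub_const q).const_mul c
    exact (h0.exp).const_add 1
  have hne : (1:ℝ) + Real.exp (c*(x-q)) ≠ 0 := by positivity
  exact h1.inv hne

lemma continuous_uMin (hc : 0 < c) (q : ℝ) : Continuous (uMin c q) :=
  continuous_iff_continuousAt.mpr fun x =>
    (hasDerivAt_uMin hc q x).differentiableAt.continuousAt

lemma isUtility_uMin (hc : 0 < c) (q : ℝ) : IsUtility Set.univ (uMin c q) := by
  refine ⟨fun x _ => (hasDerivAt_uMin hc q x).differentiableAt, fun x _ => ?_, fun x _ => ?_⟩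
  · rw [deriv_uMin hc q]
    exact (hasDerivAt_deriv_uMin hc q x).differentiableAt
  · rw [deriv_uMin hc q]
    positivity

lemma concaveOn_uMin (hc : 0 < c) (q : ℝ) : ConcaveOn ℝ Set.univ (uMin c q) := by
  refine concaveOn_of_deriv2_nonpos convex_univ (continuous_uMin hc q).continuousOn
    (fun x _ => ((hasDerivAt_uMin hc q x).differentiableAt).differentiableWithinAt)
    (fun x _ => ?_) (fun x _ => ?_)
  · rw [deriv_uMin hc q]
    exact ((hasDerivAt_deriv_uMin hc q x).differentiableAt).differentiableWithinAt
  · have h2 : deriv (deriv (uMin c q)) x = -(Real.exp (c*(x-q)) * c) / (1 + Real.exp (c*(x-q)))^2 := by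
      rw [deriv_uMin hc q]
      exact (hasDerivAt_deriv_uMin hc q x).deriv
    have : deriv^[2] (uMin c q) x = deriv (deriv (uMin c q)) x := by
      simp [Function.iterate_succ, Function.comp]
    rw [this, h2]
    apply div_nonpos_of_nonpos_of_nonneg
    · have := Real.exp_pos (c*(x-q)); nlinarith
    · positivity

lemma uMin_le_min (hc : 0 < c) (q x : ℝ) : uMin c q x ≤ min x q := by
  set M := min x q with hM
  have h1 : Real.exp (-(c*M)) ≤ Real.exp (-(c*x)) + Real.exp (-(c*q)) := by
    rcases min_cases x q with ⟨h, _⟩ | ⟨h, _⟩ <;> rw [← hM] at * <;> rw [h] <;>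
      [linarith [Real.exp_pos (-(c*q))]; linarith [Real.exp_pos (-(c*x))]]
  have hlog : -(c*M) ≤ Real.log (Real.exp (-(c*x)) + Real.exp (-(c*q))) := by
    calc -(c*M) = Real.log (Real.exp (-(c*M))) := (Real.log_exp _).symm
    _ ≤ _ := (Real.log_le_log_iff (Real.exp_pos _) (uMin_g_pos c q x)).mpr h1
  have hc1 : (0:ℝ) < 1/c := by positivity
  have := mul_le_mul_of_nonneg_left hlog hc1.le
  have hcM : (1/c) * (c*M) = M := by field_simp
  unfold uMin
  nlinarith
  -- -(1/c)*L ≤ M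

lemma min_sub_le_uMin (hc : 0 < c) (q x : ℝ) :
    min x q - Real.log 2 / c ≤ uMin c q x := by
  set M := min x q with hM
  have h2 : Real.exp (-(c*x)) + Real.exp (-(c*q)) ≤ 2 * Real.exp (-(c*M)) := by
    have hx' : Real.exp (-(c*x)) ≤ Real.exp (-(c*M)) :=
      Real.exp_le_exp.mpr (by nlinarith [min_le_left x q])
    have hq' : Real.exp (-(c*q)) ≤ Real.exp (-(c*M)) :=
      Real.exp_le_exp.mpr (by nlinarith [min_le_right x q])
    linarith
  have hlog : Real.log (Real.exp (-(c*x)) + Real.exp (-(c*q)))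
      ≤ Real.log 2 + -(c*M) := by
    calc Real.log (Real.exp (-(c*x)) + Real.exp (-(c*q)))
        ≤ Real.log (2 * Real.exp (-(c*M))) :=
          (Real.log_le_log_iff (uMin_g_pos c q x) (by positivity)).mpr h2
    _ = Real.log 2 + -(c*M) := by rw [Real.log_mul (by norm_num) (Real.exp_pos _).ne',
        Real.log_exp]
  have hc1 : (0:ℝ) < 1/c := by positivity
  have := mul_le_mul_of_nonneg_left hlog hc1.le
  have hcM : (1/c) * (c*M) = M := by field_simp
  unfold uMin
  have hlog2 : Real.log 2 / c = (1/c) * Real.log 2 := by ring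
  nlinarith

end SmoothMin


section SSDEmin

variable {P : Measure Ω} [IsProbabilityMeasure P] {X Y : Ω → ℝ} {C D c q : ℝ}

lemma bound_nonneg (hC : ∀ᵐ ω ∂P, |X ω| ≤ C) : 0 ≤ C := by
  obtain ⟨ω, hω⟩ := hC.exists
  linarith [abs_nonneg (X ω)]

lemma integrable_min_comp (hX : Measurable X) (hC : ∀ᵐ ω ∂P, |X ω| ≤ C) (q : ℝ) :
    Integrable (fun ω => min (X ω) q) P := by
  refine integrable_of_ae_bound (B := max C |q|)
    ((hX.min measurable_const).aestronglyMeasurable) ?_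
  filter_upwards [hC] with ω h
  rw [abs_le] at h ⊢
  refine ⟨le_min ?_ ?_, min_le_of_left_le ?_⟩
  · linarith [le_max_left C |q|]
  · linarith [le_max_right C |q|, neg_abs_le q]
  · linarith [le_max_left C |q|]

lemma integrable_uMin_comp (hc : 0 < c) (hX : Measurable X)
    (hC : ∀ᵐ ω ∂P, |X ω| ≤ C) (q : ℝ) :
    Integrable (fun ω => uMin c q (X ω)) P := by
  refine integrable_of_ae_bound (B := max C |q| + Real.log 2 / c)
    (((continuous_uMin hc q).measurable.comp hX).aestronglyMeasurable) ?_
  filter_upwards [hC] with ω h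
  rw [abs_le] at h
  have h1 := uMin_le_min hc q (X ω)
  have h2 := min_sub_le_uMin hc q (X ω)
  have h3 : 0 < Real.log 2 / c := div_pos (Real.log_pos one_lt_two) hc
  rw [abs_le]
  constructor
  · have : -(max C |q|) ≤ min (X ω) q :=
      le_min (by linarith [le_max_left C |q|]) (by linarith [le_max_right C |q|, neg_abs_le q])
    linarith
  · have : min (X ω) q ≤ max C |q| :=
      min_le_of_left_le (by linarith [le_max_left C |q|])
    linarith

lemma ssd_emin (hssd : SSD P X Y) (hX : Measurable X) (hC : ∀ᵐ ω ∂P, |X ω| ≤ C)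
    (hY : Measurable Y) (hD : ∀ᵐ ω ∂P, |Y ω| ≤ D) (q : ℝ) :
    ∫ ω, min (X ω) q ∂P ≤ ∫ ω, min (Y ω) q ∂P := by
  refine le_of_forall_pos_le_add fun ε hε => ?_
  set c := Real.log 2 / ε with hcdef
  have hc : 0 < c := div_pos (Real.log_pos one_lt_two) hε
  have hlogc : Real.log 2 / c = ε := by
    rw [hcdef]
    field_simp
  have h1 : ∫ ω, min (X ω) q ∂P ≤ ∫ ω, (uMin c q (X ω) + ε) ∂P := by
    refine integral_mono (integrable_min_comp hX hC q)
      ((integrable_uMin_comp hc hX hC q).add (integrable_const ε)) (fun ω => ?_)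
    have := min_sub_le_uMin hc q (X ω)
    simp only
    linarith [hlogc]
  rw [integral_add (integrable_uMin_comp hc hX hC q) (integrable_const ε)] at h1
  simp only [integral_const, measure_univ, probReal_univ, one_smul, smul_eq_mul] at h1
  have h2 : ∫ ω, uMin c q (X ω) ∂P ≤ ∫ ω, uMin c q (Y ω) ∂P :=
    hssd (uMin c q) (isUtility_uMin hc q) (concaveOn_uMin hc q)
      (integrable_uMin_comp hc hX hC q) (integrable_uMin_comp hc hY hD q)
  have h3 : ∫ ω, uMin c q (Y ω) ∂P ≤ ∫ ω, min (Y ω) q ∂P :=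
    integral_mono (integrable_uMin_comp hc hY hD q) (integrable_min_comp hY hD q)
      (fun ω => uMin_le_min hc q (Y ω))
  linarith

end SSDEmin


section RhoW

variable {P : Measure Ω} [IsProbabilityMeasure P] {X Y : Ω → ℝ} {C D t r ε : ℝ}

lemma rhoW_bddBelow (hC : ∀ᵐ ω ∂P, |X ω| ≤ C) :
    BddBelow {m : ℝ | ∀ᵐ ω ∂P, -X ω ≤ m} := by
  refine ⟨-C, fun m hm => ?_⟩
  rw [Set.mem_setOf_eq] at hm
  obtain ⟨ω, h1, h2⟩ := (hm.and hC).exists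
  rw [abs_le] at h2
  linarith

lemma rhoW_nonempty (hC : ∀ᵐ ω ∂P, |X ω| ≤ C) :
    {m : ℝ | ∀ᵐ ω ∂P, -X ω ≤ m}.Nonempty :=
  ⟨C, by filter_upwards [hC] with ω h; rw [abs_le] at h; linarith⟩

lemma rhoW_mem (hC : ∀ᵐ ω ∂P, |X ω| ≤ C) : ∀ᵐ ω ∂P, -X ω ≤ rhoW P X := by
  have key : ∀ n : ℕ, ∀ᵐ ω ∂P, -X ω ≤ rhoW P X + 1/(n+1) := by
    intro n
    have hpos : (0:ℝ) < 1/(n+1) := by positivity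
    obtain ⟨a, ha, halt⟩ := (csInf_lt_iff (rhoW_bddBelow hC) (rhoW_nonempty hC)).mp
      (lt_add_of_pos_right (rhoW P X) hpos)
    filter_upwards [ha] with ω h using le_trans h halt.le
  filter_upwards [ae_all_iff.mpr key] with ω h
  have htend : Tendsto (fun n : ℕ => rhoW P X + 1/(n+1)) atTop (nhds (rhoW P X)) := by
    have : Tendsto (fun n : ℕ => 1/((n:ℝ)+1)) atTop (nhds 0) :=
      tendsto_one_div_add_atTop_nhds_zero_nat
    simpa using (tendsto_const_nhds (x := rhoW P X)).add this
  exact ge_of_tendsto htend (Filter.Eventually.of_forall h)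

lemma rhoW_le_C (hC : ∀ᵐ ω ∂P, |X ω| ≤ C) : rhoW P X ≤ C :=
  csInf_le (rhoW_bddBelow hC) (by filter_upwards [hC] with ω h; rw [abs_le] at h; linarith)

lemma rhoW_le_of_ae (hC : ∀ᵐ ω ∂P, |X ω| ≤ C) {m : ℝ} (hm : ∀ᵐ ω ∂P, -X ω ≤ m) :
    rhoW P X ≤ m :=
  csInf_le (rhoW_bddBelow hC) hm

lemma rhoW_add_const (hC : ∀ᵐ ω ∂P, |X ω| ≤ C) (c : ℝ) :
    rhoW P (fun ω => X ω + c) = rhoW P X - c := by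
  have hC' : ∀ᵐ ω ∂P, |X ω + c| ≤ C + |c| := by
    filter_upwards [hC] with ω h
    calc |X ω + c| ≤ |X ω| + |c| := abs_add_le _ _
    _ ≤ C + |c| := by linarith
  apply le_antisymm
  · refine rhoW_le_of_ae hC' ?_
    filter_upwards [rhoW_mem hC] with ω h
    linarith
  · have h1 : rhoW P X ≤ rhoW P (fun ω => X ω + c) + c := by
      refine rhoW_le_of_ae hC ?_
      filter_upwards [rhoW_mem hC'] with ω h
      linarith
    linarith

lemma qf_ge_of_ae_ge {a : ℝ} (hX : Measurable X) (hC : ∀ᵐ ω ∂P, |X ω| ≤ C)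
    (ha : ∀ᵐ ω ∂P, a ≤ X ω) (hr : 0 < r) (hr1 : r ≤ 1) : a ≤ qf P X r := by
  refine le_csInf (qfS_nonempty hX hC hr1) (fun x hx => ?_)
  by_contra hlt
  push_neg at hlt
  have h0 : P {ω | X ω ≤ x} = 0 := by
    have hae : ∀ᵐ ω ∂P, ¬ X ω ≤ x := by
      filter_upwards [ha] with ω h using not_le.mpr (lt_of_lt_of_le hlt h)
    simpa using ae_iff.mp hae
  have hcd : cdfF P X x = 0 := by simp [cdfF, h0]
  have hx' : r ≤ cdfF P X x := hx
  rw [hcd] at hx'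
  exact (not_le.mpr hr) hx'

lemma neg_rhoW_le_qf (hX : Measurable X) (hC : ∀ᵐ ω ∂P, |X ω| ≤ C)
    (hr : 0 < r) (hr1 : r ≤ 1) : -rhoW P X ≤ qf P X r := by
  refine qf_ge_of_ae_ge hX hC ?_ hr hr1
  filter_upwards [rhoW_mem hC] with ω h
  linarith

lemma exists_qf_near_rhoW (hX : Measurable X) (hC : ∀ᵐ ω ∂P, |X ω| ≤ C) (hε : 0 < ε) :
    ∃ δ : ℝ, 0 < δ ∧ δ ≤ 1 ∧ qf P X δ ≤ -rhoW P X + ε := by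
  have hnot : ¬ (∀ᵐ ω ∂P, -X ω ≤ rhoW P X - ε) := by
    intro h
    have := rhoW_le_of_ae hC h
    linarith
  have hpos : 0 < P {ω | ¬ -X ω ≤ rhoW P X - ε} := by
    rw [pos_iff_ne_zero]
    intro h0
    exact hnot (ae_iff.mpr h0)
  have hsub : {ω | ¬ -X ω ≤ rhoW P X - ε} ⊆ {ω | X ω ≤ -rhoW P X + ε} := by
    intro ω h
    simp only [Set.mem_setOf_eq, not_le] at h ⊢
    linarith
  have hFpos : 0 < cdfF P X (-rhoW P X + ε) := by
    have hm := measure_mono hsub (μ := P)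
    have h1 : 0 < P {ω | X ω ≤ -rhoW P X + ε} := lt_of_lt_of_le hpos hm
    have := ENNReal.toReal_pos h1.ne' (measure_ne_top _ _)
    simpa [cdfF] using this
  refine ⟨min (cdfF P X (-rhoW P X + ε)) 1, lt_min hFpos one_pos, min_le_right _ _, ?_⟩
  exact qf_le_of hX hC (lt_min hFpos one_pos) (le_trans (min_le_left _ _) le_rfl)

end RhoW


section ESlemmas

variable {P : Measure Ω} [IsProbabilityMeasure P] {X Y : Ω → ℝ} {C D p p' t c r x : ℝ}

lemma cdfF_add_const (c x : ℝ) :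
    cdfF P (fun ω => X ω + c) x = cdfF P X (x - c) := by
  have : {ω | X ω + c ≤ x} = {ω | X ω ≤ x - c} := by
    ext ω; simp only [Set.mem_setOf_eq]; constructor <;> intro <;> linarith
  simp only [cdfF, this]

lemma qf_add_const (hX : Measurable X) (hC : ∀ᵐ ω ∂P, |X ω| ≤ C)
    (hr : 0 < r) (hr1 : r ≤ 1) (c : ℝ) :
    qf P (fun ω => X ω + c) r = qf P X r + c := by
  have hX' : Measurable (fun ω => X ω + c) := hX.add_const c
  have hC' : ∀ᵐ ω ∂P, |X ω + c| ≤ C + |c| := by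
    filter_upwards [hC] with ω h
    calc |X ω + c| ≤ |X ω| + |c| := abs_add_le _ _
    _ ≤ C + |c| := by linarith
  apply le_antisymm
  · apply qf_le_of hX' hC' hr
    rw [cdfF_add_const, add_sub_cancel_right]
    exact le_cdfF_qf hX hC hr hr1
  · have h := le_cdfF_qf hX' hC' hr hr1
    rw [cdfF_add_const] at h
    have := qf_le_of hX hC hr h
    linarith

lemma ES_of_lt_one (hp : p < 1) :
    ES P p X = -(1/(1-p)) * ∫ r in Set.Ioc (0:ℝ) (1-p), qf P X r := by
  rw [ES, if_pos hp, intervalIntegral.integral_of_le (by linarith)]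

lemma ES_of_one : ES P (1:ℝ) X = rhoW P X := by
  rw [ES, if_neg (lt_irrefl 1)]

lemma ES_add_const (hX : Measurable X) (hC : ∀ᵐ ω ∂P, |X ω| ≤ C)
    (hp0 : 0 ≤ p) (hp1 : p ≤ 1) (c : ℝ) :
    ES P p (fun ω => X ω + c) = ES P p X - c := by
  rcases lt_or_eq_of_le hp1 with hp | hp
  · set t := 1 - p with ht
    have ht0 : 0 < t := by simp [ht]; linarith
    have ht1 : t ≤ 1 := by simp [ht]; linarith
    have hcongr : ∫ r in Set.Ioc (0:ℝ) t, qf P (fun ω => X ω + c) r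
        = ∫ r in Set.Ioc (0:ℝ) t, (qf P X r + c) := by
      refine setIntegral_congr_fun measurableSet_Ioc (fun r hr => ?_)
      exact qf_add_const hX hC hr.1 (le_trans hr.2 ht1) c
    have hadd : ∫ r in Set.Ioc (0:ℝ) t, (qf P X r + c)
        = (∫ r in Set.Ioc (0:ℝ) t, qf P X r) + t * c := by
      rw [integral_add (integrableOn_qf hX hC) (integrableOn_const (by simp))]
      simp [Real.volume_Ioc, ENNReal.toReal_ofReal ht0.le, max_eq_left ht0.le]
    rw [ES_of_lt_one hp, ES_of_lt_one hp, ← ht, hcongr, hadd]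
    field_simp
    ring
  · subst hp
    rw [ES_of_one, ES_of_one]
    exact rhoW_add_const hC c

lemma neg_rhoW_smul_le (hX : Measurable X) (hC : ∀ᵐ ω ∂P, |X ω| ≤ C)
    (ht0 : 0 < t) (ht1 : t ≤ 1) :
    t * (-rhoW P X) ≤ ∫ r in Set.Ioc (0:ℝ) t, qf P X r := by
  have h := setIntegral_mono_on (integrableOn_const (by simp))
    (integrableOn_qf hX hC) measurableSet_Ioc
    (fun r hr => neg_rhoW_le_qf hX hC hr.1 (le_trans hr.2 ht1))
  rw [setIntegral_const] at h
  simpa [Real.volume_Ioc, ENNReal.toReal_ofReal ht0.le, max_eq_left ht0.le, smul_eq_mul] using h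

lemma ES_le_rhoW (hX : Measurable X) (hC : ∀ᵐ ω ∂P, |X ω| ≤ C)
    (hp0 : 0 ≤ p) (hp1 : p ≤ 1) : ES P p X ≤ rhoW P X := by
  rcases lt_or_eq_of_le hp1 with hp | hp
  · rw [ES_of_lt_one hp]
    set t := 1 - p with htdef
    have ht0 : 0 < t := by simp [htdef]; linarith
    have ht1 : t ≤ 1 := by simp [htdef]; linarith
    have h := neg_rhoW_smul_le hX hC ht0 ht1
    have h2 : (1/t) * (t * (-rhoW P X)) ≤ (1/t) * ∫ r in Set.Ioc (0:ℝ) t, qf P X r :=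
      mul_le_mul_of_nonneg_left h (by positivity)
    have h3 : (1/t) * (t * (-rhoW P X)) = -rhoW P X := by field_simp
    rw [h3] at h2
    linarith
  · subst hp
    rw [ES_of_one]

lemma ES_mono (hX : Measurable X) (hC : ∀ᵐ ω ∂P, |X ω| ≤ C)
    (hp0 : 0 ≤ p) (hpp : p ≤ p') (hp'1 : p' ≤ 1) : ES P p X ≤ ES P p' X := by
  rcases lt_or_eq_of_le hp'1 with hp' | hp'
  swap
  · subst hp'
    rw [ES_of_one]
    exact ES_le_rhoW hX hC hp0 (le_trans hpp hp'1)
  have hp1 : p < 1 := lt_of_le_of_lt hpp hp'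
  set t := 1 - p with htdef
  set t' := 1 - p' with ht'def
  have ht'0 : 0 < t' := by simp [ht'def]; linarith
  have htt' : t' ≤ t := by simp [htdef, ht'def]; linarith
  have ht0 : 0 < t := lt_of_lt_of_le ht'0 htt'
  have ht1 : t ≤ 1 := by simp [htdef]; linarith
  have ht'1 : t' ≤ 1 := le_trans htt' ht1
  set Q := qf P X with hQ
  set H := ∫ r in Set.Ioc (0:ℝ) t, Q r with hH
  set H' := ∫ r in Set.Ioc (0:ℝ) t', Q r with hH'
  have hsplit : H = H' + ∫ r in Set.Ioc t' t, Q r := by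
    rw [hH, ← Set.Ioc_union_Ioc_eq_Ioc ht'0.le htt']
    exact setIntegral_union (Set.Ioc_disjoint_Ioc_of_le le_rfl) measurableSet_Ioc
      (integrableOn_qf hX hC) (integrableOn_qf_Ioc hX hC ht'0.le)
  have h2 : (t - t') * Q t' ≤ ∫ r in Set.Ioc t' t, Q r := by
    have h := setIntegral_mono_on (integrableOn_const (by simp))
      (integrableOn_qf_Ioc hX hC ht'0.le) measurableSet_Ioc
      (fun r hr => qf_mono_on hX hC ht'0 hr.1.le (le_trans hr.2 ht1))
    rw [setIntegral_const] at h
    simpa [Real.volume_Ioc, ENNReal.toReal_ofReal (by linarith : (0:ℝ) ≤ t - t'),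
      max_eq_left (by linarith : (0:ℝ) ≤ t - t'), smul_eq_mul] using h
  have h3 : H' ≤ t' * Q t' := integral_Ioc_qf_le hX hC ht'0 ht'1
  have hkey : t * H' ≤ t' * H := by nlinarith
  rw [ES_of_lt_one hp1, ES_of_lt_one hp', ← htdef, ← ht'def, ← hH, ← hH']
  have : H' / t' ≤ H / t := by
    rw [div_le_div_iff₀ ht'0 ht0]
    nlinarith
  have e1 : -(1/t) * H = -(H/t) := by ring
  have e2 : -(1/t') * H' = -(H'/t') := by ring
  rw [e1, e2]
  linarith

lemma neg_rhoW_ge (hC : ∀ᵐ ω ∂P, |X ω| ≤ C) : -C ≤ rhoW P X := by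
  obtain ⟨ω, h1, h2⟩ := ((rhoW_mem hC).and hC).exists
  rw [abs_le] at h2
  linarith

lemma ES_bounds (hX : Measurable X) (hC : ∀ᵐ ω ∂P, |X ω| ≤ C)
    (hp0 : 0 ≤ p) (hp1 : p ≤ 1) :
    -(max C 0) ≤ ES P p X ∧ ES P p X ≤ max C 0 := by
  constructor
  · rcases lt_or_eq_of_le hp1 with hp | hp
    · rw [ES_of_lt_one hp]
      set t := 1 - p with htdef
      have ht0 : 0 < t := by simp [htdef]; linarith
      have h : ∫ r in Set.Ioc (0:ℝ) t, qf P X r ≤ t * max C 0 := by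
        have h := setIntegral_mono_on (s := Set.Ioc (0:ℝ) t) (integrableOn_qf hX hC)
          (integrableOn_const (by simp)) measurableSet_Ioc
          (fun r _ => le_trans (le_abs_self _) (qf_abs_le hX hC r))
        rw [setIntegral_const] at h
        simpa [Real.volume_Ioc, ENNReal.toReal_ofReal ht0.le, max_eq_left ht0.le, smul_eq_mul] using h
      have h2 : -(1/t) * (t * max C 0) ≤ -(1/t) * ∫ r in Set.Ioc (0:ℝ) t, qf P X r := by
        exact mul_le_mul_of_nonpos_left h
          (neg_nonpos_of_nonneg (by positivity : (0:ℝ) ≤ 1/t))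
      have h3 : -(1/t) * (t * max C 0) = -(max C 0) := by field_simp
      linarith [h2, h3]
    · subst hp
      rw [ES_of_one]
      have h4 := neg_rhoW_ge hC
      have h5 : -(max C 0) ≤ -C := neg_le_neg (le_max_left _ _)
      linarith
  · have h1 := ES_le_rhoW hX hC hp0 hp1
    have h2 := rhoW_le_C hC
    have : C ≤ max C 0 := le_max_left _ _
    linarith

end ESlemmas


section Concave

lemma concave_tangent {u : ℝ → ℝ} (hconc : ConcaveOn ℝ Set.univ u)
    (hdiff : ∀ x : ℝ, DifferentiableAt ℝ u x) (a b : ℝ) :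
    u a ≤ u b + deriv u b * (a - b) := by
  rcases lt_trichotomy a b with h | h | h
  · have hs := hconc.deriv_le_slope (Set.mem_univ a) (Set.mem_univ b) h (hdiff b)
    rw [slope_def_field] at hs
    have hba : (0:ℝ) < b - a := by linarith
    rw [le_div_iff₀ hba] at hs
    nlinarith
  · subst h; simp
  · have hs := hconc.slope_le_deriv (Set.mem_univ b) (Set.mem_univ a) h (hdiff b)
    rw [slope_def_field] at hs
    have hab : (0:ℝ) < a - b := by linarith
    rw [div_le_iff₀ hab] at hs
    nlinarith

lemma concave_deriv_antitone {u : ℝ → ℝ} (hconc : ConcaveOn ℝ Set.univ u)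
    (hdiff : ∀ x : ℝ, DifferentiableAt ℝ u x) {a b : ℝ} (hab : a ≤ b) :
    deriv u b ≤ deriv u a := by
  rcases eq_or_lt_of_le hab with rfl | h
  · exact le_refl _
  · calc deriv u b ≤ slope u a b :=
        hconc.deriv_le_slope (Set.mem_univ a) (Set.mem_univ b) h (hdiff b)
    _ ≤ deriv u a := hconc.slope_le_deriv (Set.mem_univ a) (Set.mem_univ b) h (hdiff a)

/-- Fubini positivity: if all the partial integrals of `g - f` are nonnegative and `w` is a
nonnegative antitone weight, then `∫ w (g - f) ≥ 0`. -/
lemma integral_weight_nonneg {f g w : ℝ → ℝ} (hf : Measurable f) (hg : Measurable g)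
    (hw : Measurable w) {B M : ℝ}
    (hfB : ∀ r, |f r| ≤ B) (hgB : ∀ r, |g r| ≤ B)
    (hw0 : ∀ r, 0 ≤ w r) (hwM : ∀ r, w r ≤ M)
    (hwa : ∀ r r' : ℝ, 0 < r → r ≤ r' → r' ≤ 1 → w r' ≤ w r)
    (hH : ∀ t : ℝ, 0 < t → t ≤ 1 → ∫ r in Set.Ioc (0:ℝ) t, f r ≤ ∫ r in Set.Ioc (0:ℝ) t, g r) :
    0 ≤ ∫ r in Set.Ioc (0:ℝ) 1, w r * (g r - f r) := by
  by_cases hM : M ≤ 0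
  · have hzero : ∀ r, w r = 0 := fun r => le_antisymm (le_trans (hwM r) hM) (hw0 r)
    have hfun : (fun r => w r * (g r - f r)) = fun _ => (0:ℝ) := by
      funext r; simp [hzero]
    rw [hfun]
    simp
  push_neg at hM
  set μ := volume.restrict (Set.Ioc (0:ℝ) 1) with hμ
  set ν := volume.restrict (Set.Ioc (0:ℝ) M) with hν
  haveI : IsFiniteMeasure μ := ⟨by rw [hμ, Measure.restrict_apply_univ]; simp⟩
  haveI : IsFiniteMeasure ν := ⟨by rw [hν, Measure.restrict_apply_univ]; simp⟩
  set h : ℝ → ℝ := fun r => g r - f r with hh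
  have hhmeas : Measurable h := hg.sub hf
  have hintf : ∀ t : ℝ, IntegrableOn f (Set.Ioc (0:ℝ) t) := by
    intro t
    haveI : IsFiniteMeasure (volume.restrict (Set.Ioc (0:ℝ) t)) :=
      ⟨by rw [Measure.restrict_apply_univ]; simp⟩
    exact integrable_of_ae_bound hf.aestronglyMeasurable (Filter.Eventually.of_forall hfB)
  have hintg : ∀ t : ℝ, IntegrableOn g (Set.Ioc (0:ℝ) t) := by
    intro t
    haveI : IsFiniteMeasure (volume.restrict (Set.Ioc (0:ℝ) t)) :=
      ⟨by rw [Measure.restrict_apply_univ]; simp⟩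
    exact integrable_of_ae_bound hg.aestronglyMeasurable (Filter.Eventually.of_forall hgB)
  set S : Set (ℝ × ℝ) := {z : ℝ × ℝ | z.2 < w z.1} with hS
  have hSmeas : MeasurableSet S := measurableSet_lt measurable_snd (hw.comp measurable_fst)
  set F : ℝ → ℝ → ℝ := fun r s => S.indicator (fun z => h z.1) (r, s) with hF
  have huncurry : Function.uncurry F = S.indicator (fun z : ℝ × ℝ => h z.1) := by
    funext z
    simp [Function.uncurry, hF]
  have hFint : Integrable (Function.uncurry F) (μ.prod ν) := by
    rw [huncurry]
    refine integrable_of_ae_bound (B := 2*B)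
      ((hhmeas.comp measurable_fst).indicator hSmeas).aestronglyMeasurable
      (Filter.Eventually.of_forall fun z => ?_)
    have hb : |h z.1| ≤ 2*B := by
      have := abs_sub (g z.1) (f z.1)
      calc |h z.1| ≤ |g z.1| + |f z.1| := abs_sub _ _
      _ ≤ 2*B := by linarith [hfB z.1, hgB z.1]
    by_cases hz : z ∈ S
    · rw [Set.indicator_of_mem hz]; exact hb
    · rw [Set.indicator_of_notMem hz]
      simp only [abs_zero]
      linarith [abs_nonneg (h z.1), hb]
  have hswap := integral_integral_swap (f := F) hFint
  have hinner1 : ∀ r : ℝ, ∫ s, F r s ∂ν = w r * h r := by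
    intro r
    have hfs : (fun s => F r s) = (Set.Iio (w r)).indicator (fun _ => h r) := by
      funext s
      simp only [hF]
      by_cases hs : s < w r
      · rw [Set.indicator_of_mem (by exact hs : s ∈ Set.Iio (w r)),
          Set.indicator_of_mem (by exact hs : (r, s) ∈ S)]
      · rw [Set.indicator_of_notMem (by exact hs : ¬ s ∈ Set.Iio (w r)),
          Set.indicator_of_notMem (by exact hs : ¬ (r, s) ∈ S)]
    rw [hfs, integral_indicator measurableSet_Iio, setIntegral_const]
    have hset : Set.Iio (w r) ∩ Set.Ioc 0 M = Set.Ioo 0 (w r) := by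
      ext s
      simp only [Set.mem_inter_iff, Set.mem_Iio, Set.mem_Ioc, Set.mem_Ioo]
      constructor
      · rintro ⟨h1, h2, _⟩; exact ⟨h2, h1⟩
      · rintro ⟨h1, h2⟩; exact ⟨h2, h1, le_trans h2.le (hwM r)⟩
    rw [hν, measureReal_restrict_apply measurableSet_Iio, hset, Real.volume_real_Ioo, sub_zero,
      max_eq_left (hw0 r), smul_eq_mul]
  have hinner2 : ∀ s : ℝ, s ∈ Set.Ioc (0:ℝ) M → 0 ≤ ∫ r, F r s ∂μ := by
    intro s hs
    have hfr : (fun r => F r s) = ({r : ℝ | s < w r}).indicator h := by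
      funext r
      simp only [hF]
      by_cases hr : s < w r
      · rw [Set.indicator_of_mem (by exact hr : r ∈ {r : ℝ | s < w r}),
          Set.indicator_of_mem (by exact hr : (r, s) ∈ S)]
      · rw [Set.indicator_of_notMem (by exact hr : ¬ r ∈ {r : ℝ | s < w r}),
          Set.indicator_of_notMem (by exact hr : ¬ (r, s) ∈ S)]
    have hwsmeas : MeasurableSet {r : ℝ | s < w r} := measurableSet_lt measurable_const hw
    rw [hfr, integral_indicator hwsmeas, hμ, Measure.restrict_restrict hwsmeas]
    set A := {r : ℝ | s < w r} ∩ Set.Ioc (0:ℝ) 1 with hA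
    have hbdd : BddAbove (insert (0:ℝ) A) := by
      refine ⟨1, ?_⟩
      rintro x (rfl | hx)
      · norm_num
      · exact hx.2.2
    set t₀ := sSup (insert (0:ℝ) A) with ht₀
    have ht0_nonneg : 0 ≤ t₀ := le_csSup hbdd (Set.mem_insert 0 A)
    have ht0_le1 : t₀ ≤ 1 := by
      refine csSup_le (Set.insert_nonempty _ _) ?_
      rintro x (rfl | hx)
      · norm_num
      · exact hx.2.2
    have hsub1 : Set.Ioo 0 t₀ ⊆ A := by
      intro r hr
      obtain ⟨a, ha, hra⟩ := exists_lt_of_lt_csSup (Set.insert_nonempty _ _) hr.2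
      rcases ha with rfl | haA
      · exact absurd hr.1 (by linarith)
      · refine ⟨?_, hr.1, le_trans hra.le haA.2.2⟩
        exact lt_of_lt_of_le haA.1 (hwa r a hr.1 hra.le haA.2.2)
    have hsub2 : A ⊆ Set.Ioc 0 t₀ := fun r hr =>
      ⟨hr.2.1, le_csSup hbdd (Set.mem_insert_of_mem _ hr)⟩
    have haemeq : A =ᵐ[volume] Set.Ioc 0 t₀ := by
      rw [ae_eq_set]
      constructor
      · rw [Set.diff_eq_empty.mpr hsub2]; simp
      · refine measure_mono_null (fun x hx => ?_) (Real.volume_singleton (a := t₀))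
        rcases hx with ⟨hx1, hx2⟩
        rcases eq_or_lt_of_le hx1.2 with heq | hlt
        · exact heq
        · exact absurd (hsub1 ⟨hx1.1, hlt⟩) hx2
    rw [setIntegral_congr_set haemeq]
    rcases eq_or_lt_of_le ht0_nonneg with heq | hpos
    · rw [← heq]
      simp
    · have hHt := hH t₀ hpos ht0_le1
      rw [hh]
      rw [integral_sub (hintg t₀) (hintf t₀)]
      linarith
  have hLHS : (fun r => ∫ s, F r s ∂ν) = fun r => w r * h r := funext hinner1
  rw [hLHS] at hswap
  have : 0 ≤ ∫ s, (∫ r, F r s ∂μ) ∂ν := setIntegral_nonneg measurableSet_Ioc hinner2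
  rw [← hswap] at this
  exact this

end Concave



section Compare

variable {P : Measure Ω} [IsProbabilityMeasure P] {X Y : Ω → ℝ} {C D : ℝ}

lemma ssd_of_partial (hY : Measurable Y) (hD : ∀ᵐ ω ∂P, |Y ω| ≤ D)
    (hX : Measurable X) (hC : ∀ᵐ ω ∂P, |X ω| ≤ C)
    (hH : ∀ t : ℝ, 0 < t → t ≤ 1 →
      ∫ r in Set.Ioc (0:ℝ) t, qf P Y r ≤ ∫ r in Set.Ioc (0:ℝ) t, qf P X r) :
    SSD P Y X := by
  intro u hu hconc hintY hintX
  have hdiff : ∀ x : ℝ, DifferentiableAt ℝ u x := fun x => hu.1 x (Set.mem_univ x)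
  have hderivdiff : ∀ x : ℝ, DifferentiableAt ℝ (deriv u) x := fun x => hu.2.1 x (Set.mem_univ x)
  have hupos : ∀ x : ℝ, 0 < deriv u x := fun x => hu.2.2 x (Set.mem_univ x)
  have hucont : Continuous u := continuous_iff_continuousAt.mpr fun x => (hdiff x).continuousAt
  have hu'cont : Continuous (deriv u) :=
    continuous_iff_continuousAt.mpr fun x => (hderivdiff x).continuousAt
  set B := max (max C 0) (max D 0) with hB
  set f := qf P Y with hfdef
  set g := qf P X with hgdef
  have hfB : ∀ r, |f r| ≤ B := fun r => le_trans (qf_abs_le hY hD r) (le_max_right _ _)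
  have hgB : ∀ r, |g r| ≤ B := fun r => le_trans (qf_abs_le hX hC r) (le_max_left _ _)
  set w := fun r => deriv u (g r) with hwdef
  have htan : ∀ r, u (f r) ≤ u (g r) - w r * (g r - f r) := by
    intro r
    have h1 := concave_tangent hconc hdiff (f r) (g r)
    have h2 : deriv u (g r) * (f r - g r) = -(w r * (g r - f r)) := by rw [hwdef]; ring
    linarith
  have hwmeas : Measurable w := hu'cont.measurable.comp (measurable_qf hX hC)
  have hw0 : ∀ r, 0 ≤ w r := fun r => (hupos _).le
  have hwM : ∀ r, w r ≤ deriv u (-B) := fun r =>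
    concave_deriv_antitone hconc hdiff (by linarith [(abs_le.mp (hgB r)).1])
  have hwa : ∀ r r' : ℝ, 0 < r → r ≤ r' → r' ≤ 1 → w r' ≤ w r := fun r r' h1 h2 h3 =>
    concave_deriv_antitone hconc hdiff (qf_mono_on hX hC h1 h2 h3)
  have hkey := integral_weight_nonneg (measurable_qf hY hD) (measurable_qf hX hC)
    hwmeas hfB hgB hw0 hwM hwa hH
  have humono : Monotone u := (strictMono_of_deriv_pos hupos).monotone
  have hub : ∀ x : ℝ, |x| ≤ B → |u x| ≤ max |u B| |u (-B)| := by
    intro x hx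
    rw [abs_le] at hx ⊢
    constructor
    · have h1 : u (-B) ≤ u x := humono (by linarith)
      have : -(max |u B| |u (-B)|) ≤ -(|u (-B)|) := by
        simp only [neg_le_neg_iff]
        exact le_max_right _ _
      linarith [neg_abs_le (u (-B))]
    · have h1 : u x ≤ u B := humono (by linarith)
      linarith [le_abs_self (u B), le_max_left (|u B|) (|u (-B)|)]
  haveI : IsFiniteMeasure (volume.restrict (Set.Ioc (0:ℝ) 1)) :=
    ⟨by rw [Measure.restrict_apply_univ]; simp⟩
  have hintuf : IntegrableOn (fun r => u (f r)) (Set.Ioc (0:ℝ) 1) :=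
    integrable_of_ae_bound
      ((hucont.measurable.comp (measurable_qf hY hD)).aestronglyMeasurable)
      (Filter.Eventually.of_forall fun r => hub _ (hfB r))
  have hintug : IntegrableOn (fun r => u (g r)) (Set.Ioc (0:ℝ) 1) :=
    integrable_of_ae_bound
      ((hucont.measurable.comp (measurable_qf hX hC)).aestronglyMeasurable)
      (Filter.Eventually.of_forall fun r => hub _ (hgB r))
  have hB0 : (0:ℝ) ≤ B := le_trans (abs_nonneg _) (hfB 0)
  have hintwh : IntegrableOn (fun r => w r * (g r - f r)) (Set.Ioc (0:ℝ) 1) := by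
    refine integrable_of_ae_bound (B := deriv u (-B) * (2*B))
      ((hwmeas.mul ((measurable_qf hX hC).sub (measurable_qf hY hD))).aestronglyMeasurable)
      (Filter.Eventually.of_forall fun r => ?_)
    rw [abs_mul]
    refine mul_le_mul ?_ ?_ (abs_nonneg _) (le_trans (hw0 r) (hwM r))
    · rw [abs_of_nonneg (hw0 r)]; exact hwM r
    · calc |g r - f r| ≤ |g r| + |f r| := abs_sub _ _
      _ ≤ 2*B := by linarith [hfB r, hgB r]
  have hcomp : ∫ r in Set.Ioc (0:ℝ) 1, u (f r) ≤ ∫ r in Set.Ioc (0:ℝ) 1, u (g r) := by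
    have h1 : ∫ r in Set.Ioc (0:ℝ) 1, u (f r)
        ≤ ∫ r in Set.Ioc (0:ℝ) 1, (u (g r) - w r * (g r - f r)) :=
      setIntegral_mono_on hintuf (hintug.sub hintwh) measurableSet_Ioc (fun r _ => htan r)
    rw [integral_sub hintug hintwh] at h1
    linarith
  calc ∫ ω, u (Y ω) ∂P = ∫ r in Set.Ioc (0:ℝ) 1, u (f r) :=
        (integral_qf_comp hY hD hucont.measurable).symm
  _ ≤ ∫ r in Set.Ioc (0:ℝ) 1, u (g r) := hcomp
  _ = ∫ ω, u (X ω) ∂P := integral_qf_comp hX hC hucont.measurable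

/-- From domination of all Expected Shortfalls, obtain SSD. -/
lemma ssd_of_ES_le (hY : Measurable Y) (hD : ∀ᵐ ω ∂P, |Y ω| ≤ D)
    (hX : Measurable X) (hC : ∀ᵐ ω ∂P, |X ω| ≤ C)
    (hES : ∀ p : ℝ, 0 ≤ p → p ≤ 1 → ES P p X ≤ ES P p Y) :
    SSD P Y X := by
  refine ssd_of_partial hY hD hX hC (fun t ht0 ht1 => ?_)
  have hp := hES (1 - t) (by linarith) (by linarith)
  rw [ES_of_lt_one (by linarith), ES_of_lt_one (by linarith)] at hp
  have h1t : (1:ℝ) - (1 - t) = t := by ring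
  rw [h1t] at hp
  have h2 := mul_le_mul_of_nonneg_left hp (by positivity : (0:ℝ) ≤ t)
  have e1 : t * (-(1/t) * ∫ r in Set.Ioc (0:ℝ) t, qf P X r)
      = -(∫ r in Set.Ioc (0:ℝ) t, qf P X r) := by field_simp
  have e2 : t * (-(1/t) * ∫ r in Set.Ioc (0:ℝ) t, qf P Y r)
      = -(∫ r in Set.Ioc (0:ℝ) t, qf P Y r) := by field_simp
  rw [e1, e2] at h2
  linarith

end Compare


section Backward

variable {P : Measure Ω} [IsProbabilityMeasure P] {X Y : Ω → ℝ} {C D p : ℝ}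

lemma ES_le_of_ssd (hssd : SSD P X Y) (hX : Measurable X) (hC : ∀ᵐ ω ∂P, |X ω| ≤ C)
    (hY : Measurable Y) (hD : ∀ᵐ ω ∂P, |Y ω| ≤ D) (hp0 : 0 ≤ p) (hp1 : p ≤ 1) :
    ES P p Y ≤ ES P p X := by
  have hmin := ssd_emin hssd hX hC hY hD
  have hqf : ∀ t : ℝ, 0 < t → t ≤ 1 →
      ∫ r in Set.Ioc (0:ℝ) t, qf P X r ≤ ∫ r in Set.Ioc (0:ℝ) t, qf P Y r :=
    fun t h1 h2 => integral_qf_le_of_emin hX hC hY hD hmin h1 h2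
  rcases lt_or_eq_of_le hp1 with hp | hp
  · rw [ES_of_lt_one hp, ES_of_lt_one hp]
    have ht0 : (0:ℝ) < 1 - p := by linarith
    exact mul_le_mul_of_nonpos_left (hqf (1-p) ht0 (by linarith))
      (neg_nonpos_of_nonneg (by positivity))
  · subst hp
    rw [ES_of_one, ES_of_one]
    refine le_of_forall_pos_le_add fun ε hε => ?_
    obtain ⟨δ, hδ0, hδ1, hδ⟩ := exists_qf_near_rhoW hY hD hε
    have h1 := neg_rhoW_smul_le hX hC hδ0 hδ1
    have h2 := hqf δ hδ0 hδ1
    have h3 := integral_Ioc_qf_le hY hD hδ0 hδ1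
    nlinarith [mul_le_mul_of_nonneg_left hδ hδ0.le]

end Backward


/-- A monetary risk measure `ρ` is SSD-consistent iff it admits
the representation `ρ(X) = inf_{g ∈ 𝒢} sup_{p ∈ [0,1]} (ES_p(X) - g(p))` for a
family `𝒢` of nondecreasing functions `g : [0,1] → ℝ`. -/
theorem statement6 (P : Measure Ω) [IsProbabilityMeasure P] (hP : Atomless P)
    (ρ : (Ω → ℝ) → ℝ) (hρ : IsRiskMeasure P ρ) :
    (∀ X Y : Ω → ℝ, MemX P X → MemX P Y → SSD P X Y → ρ Y ≤ ρ X) ↔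
      ∃ 𝒢 : Set (ℝ → ℝ), 𝒢.Nonempty ∧
        (∀ g ∈ 𝒢, MonotoneOn g (Set.Icc 0 1)) ∧
        (∀ X : Ω → ℝ, MemX P X →
          ρ X = ⨅ g : 𝒢, ⨆ p : Set.Icc (0:ℝ) 1, (ES P p.1 X - (g : ℝ → ℝ) p.1)) := by
  haveI hIccNE : Nonempty (Set.Icc (0:ℝ) 1) := ⟨⟨0, by norm_num⟩⟩
  constructor
  · -- forward: consistency gives the representation
    intro hcons
    refine ⟨{h : ℝ → ℝ | ∃ Z : Ω → ℝ, MemX P Z ∧ h = fun p => ES P p Z - ρ Z}, ?_, ?_, ?_⟩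
    · exact ⟨fun p => ES P p (fun _ => (0:ℝ)) - ρ (fun _ => (0:ℝ)),
        ⟨fun _ => (0:ℝ), ⟨measurable_const, 0, by simp⟩, rfl⟩⟩
    · rintro g ⟨Z, ⟨hZm, CZ, hCZ⟩, rfl⟩
      intro p hp p' hp' hpp
      have := ES_mono hZm hCZ hp.1 hpp hp'.2
      simp only
      linarith
    · intro X hXmem
      obtain ⟨hXm, CX, hCX⟩ := hXmem
      have keyA : ∀ Z : Ω → ℝ, MemX P Z →
          ρ X ≤ ⨆ p : Set.Icc (0:ℝ) 1, (ES P p.1 X - (ES P p.1 Z - ρ Z)) := by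
        intro Z hZmem
        obtain ⟨hZm, CZ, hCZ⟩ := hZmem
        set m := ⨆ p : Set.Icc (0:ℝ) 1, (ES P p.1 X - (ES P p.1 Z - ρ Z)) with hm
        have hbdd : BddAbove (Set.range fun p : Set.Icc (0:ℝ) 1 =>
            ES P p.1 X - (ES P p.1 Z - ρ Z)) := by
          refine ⟨max CX 0 + max CZ 0 + ρ Z, ?_⟩
          rintro _ ⟨p, rfl⟩
          have h1 := (ES_bounds hXm hCX p.2.1 p.2.2).2
          have h2 := (ES_bounds hZm hCZ p.2.1 p.2.2).1
          simp only
          linarith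
        have hle : ∀ p : Set.Icc (0:ℝ) 1, ES P p.1 X - (ES P p.1 Z - ρ Z) ≤ m :=
          fun p => le_ciSup hbdd p
        set c := ρ Z - m with hc
        have hCZ' : ∀ᵐ ω ∂P, |Z ω + c| ≤ CZ + |c| := by
          filter_upwards [hCZ] with ω h
          calc |Z ω + c| ≤ |Z ω| + |c| := abs_add_le _ _
          _ ≤ CZ + |c| := by linarith
        have hssd : SSD P (fun ω => Z ω + c) X := by
          refine ssd_of_ES_le (hZm.add_const c) hCZ' hXm hCX ?_
          intro p h0 h1
          rw [ES_add_const hZm hCZ h0 h1]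
          have := hle ⟨p, h0, h1⟩
          simp only at this
          linarith
        have hcons' := hcons (fun ω => Z ω + c) X
          ⟨hZm.add_const c, CZ + |c|, hCZ'⟩ ⟨hXm, CX, hCX⟩ hssd
        rw [hρ.2 Z ⟨hZm, CZ, hCZ⟩ c] at hcons'
        rw [hc] at hcons'
        linarith
      have hXmem' : (fun p => ES P p X - ρ X) ∈
          {h : ℝ → ℝ | ∃ Z : Ω → ℝ, MemX P Z ∧ h = fun p => ES P p Z - ρ Z} :=
        ⟨X, ⟨hXm, CX, hCX⟩, rfl⟩
      haveI : Nonempty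
          ↥{h : ℝ → ℝ | ∃ Z : Ω → ℝ, MemX P Z ∧ h = fun p => ES P p Z - ρ Z} :=
        ⟨⟨_, hXmem'⟩⟩
      have hbddBelow : BddBelow (Set.range fun g :
          ↥{h : ℝ → ℝ | ∃ Z : Ω → ℝ, MemX P Z ∧ h = fun p => ES P p Z - ρ Z} =>
          ⨆ p : Set.Icc (0:ℝ) 1, (ES P p.1 X - (g : ℝ → ℝ) p.1)) := by
        refine ⟨ρ X, ?_⟩
        rintro _ ⟨⟨g, Z, hZmem, rfl⟩, rfl⟩
        exact keyA Z hZmem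
      apply le_antisymm
      · refine le_ciInf ?_
        rintro ⟨g, Z, hZmem, rfl⟩
        exact keyA Z hZmem
      · have h1 := ciInf_le hbddBelow (⟨_, hXmem'⟩ :
          ↥{h : ℝ → ℝ | ∃ Z : Ω → ℝ, MemX P Z ∧ h = fun p => ES P p Z - ρ Z})
        have h2 : (⨆ p : Set.Icc (0:ℝ) 1,
            (ES P p.1 X - (fun q => ES P q X - ρ X) p.1)) = ρ X := by
          have he : (fun p : Set.Icc (0:ℝ) 1 =>
              ES P p.1 X - (fun q => ES P q X - ρ X) p.1) = fun _ => ρ X := by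
            funext p
            simp only
            ring
          rw [he, ciSup_const]
        calc (⨅ g : ↥{h : ℝ → ℝ | ∃ Z : Ω → ℝ, MemX P Z ∧ h = fun p => ES P p Z - ρ Z},
              ⨆ p : Set.Icc (0:ℝ) 1, (ES P p.1 X - (g : ℝ → ℝ) p.1)) ≤ _ := h1
        _ = ρ X := h2
  · -- backward: the representation gives consistency
    rintro ⟨𝒢, hne, hmono, hrep⟩ X Y hXmem hYmem hssd
    obtain ⟨hXm, CX, hCX⟩ := hXmem
    obtain ⟨hYm, CY, hCY⟩ := hYmem
    haveI : Nonempty ↥𝒢 := ⟨⟨hne.choose, hne.choose_spec⟩⟩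
    have hES : ∀ p : ℝ, 0 ≤ p → p ≤ 1 → ES P p Y ≤ ES P p X :=
      fun p h0 h1 => ES_le_of_ssd hssd hXm hCX hYm hCY h0 h1
    have h0mem : (0:ℝ) ∈ Set.Icc (0:ℝ) 1 := ⟨le_refl 0, zero_le_one⟩
    have hbddX : ∀ g : ↥𝒢, BddAbove (Set.range fun p : Set.Icc (0:ℝ) 1 =>
        ES P p.1 X - (g : ℝ → ℝ) p.1) := by
      intro g
      refine ⟨max CX 0 - (g : ℝ → ℝ) 0, ?_⟩
      rintro _ ⟨p, rfl⟩
      have h1 := (ES_bounds hXm hCX p.2.1 p.2.2).2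
      have h2 : (g : ℝ → ℝ) 0 ≤ (g : ℝ → ℝ) p.1 := hmono _ g.2 h0mem p.2 p.2.1
      simp only
      linarith
    have hbddY : ∀ g : ↥𝒢, BddAbove (Set.range fun p : Set.Icc (0:ℝ) 1 =>
        ES P p.1 Y - (g : ℝ → ℝ) p.1) := by
      intro g
      refine ⟨max CY 0 - (g : ℝ → ℝ) 0, ?_⟩
      rintro _ ⟨p, rfl⟩
      have h1 := (ES_bounds hYm hCY p.2.1 p.2.2).2
      have h2 : (g : ℝ → ℝ) 0 ≤ (g : ℝ → ℝ) p.1 := hmono _ g.2 h0mem p.2 p.2.1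
      simp only
      linarith
    have hpoint : ∀ g : ↥𝒢,
        (⨆ p : Set.Icc (0:ℝ) 1, (ES P p.1 Y - (g : ℝ → ℝ) p.1))
          ≤ ⨆ p : Set.Icc (0:ℝ) 1, (ES P p.1 X - (g : ℝ → ℝ) p.1) := by
      intro g
      refine ciSup_mono (hbddX g) (fun p => ?_)
      have := hES p.1 p.2.1 p.2.2
      linarith
    rw [hrep X ⟨hXm, CX, hCX⟩, hrep Y ⟨hYm, CY, hCY⟩]
    by_cases hbb : BddBelow (Set.range fun g : ↥𝒢 =>
        ⨆ p : Set.Icc (0:ℝ) 1, (ES P p.1 Y - (g : ℝ → ℝ) p.1))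
    · exact le_ciInf fun g => le_trans (ciInf_le hbb g) (hpoint g)
    · have hbbX : ¬ BddBelow (Set.range fun g : ↥𝒢 =>
          ⨆ p : Set.Icc (0:ℝ) 1, (ES P p.1 X - (g : ℝ → ℝ) p.1)) := by
        rintro ⟨b, hb⟩
        apply hbb
        refine ⟨b - (max CX 0 + max CY 0), ?_⟩
        rintro _ ⟨g, rfl⟩
        have h1 : (⨆ p : Set.Icc (0:ℝ) 1, (ES P p.1 X - (g : ℝ → ℝ) p.1))
            ≤ (⨆ p : Set.Icc (0:ℝ) 1, (ES P p.1 Y - (g : ℝ → ℝ) p.1))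
              + (max CX 0 + max CY 0) := by
          refine ciSup_le fun p => ?_
          have h2 : ES P p.1 Y - (g : ℝ → ℝ) p.1
              ≤ ⨆ p : Set.Icc (0:ℝ) 1, (ES P p.1 Y - (g : ℝ → ℝ) p.1) :=
            le_ciSup (hbddY g) p
          have h3 := (ES_bounds hXm hCX p.2.1 p.2.2).2
          have h4 := (ES_bounds hYm hCY p.2.1 p.2.2).1
          linarith
        have h5 := hb (Set.mem_range_self g)
        simp only at h1 h5 ⊢
        linarith
      rw [Real.iInf_of_not_bddBelow hbb, Real.iInf_of_not_bddBelow hbbX]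

end Paper
end
end
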